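/- arXiv:math-ph/0508039 — 4 statements merged into one kernel-verified Lean document; each statement's English description precedes it below -/
import Mathlib

section
/- If φ: [0,∞) → [0,∞) is nonincreasing with ∫₀^∞ r^{n-2} φ(r)^{1/2} dr < ∞ (n ≥ 2), then ∫₀^∞ r^{n-1} φ(r) dr < ∞. -/
open MeasureTheory Set

set_option maxHeartbeats 2000000 in
theorem stmt_1 (n : ℕ) (hn : 2 ≤ n) (φ : ℝ → ℝ)
    (hφ0 : ∀ r, 0 ≤ r → 0 ≤ φ r)
    (hmono : AntitoneOn φ (Ici 0))
    (hint : IntegrableOn (fun r => r ^ (n - 2) * Real.sqrt (φ r)) (Ioi 0)) :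
    IntegrableOn (fun r => r ^ (n - 1) * φ r) (Ioi 0) := by
  set f : ℝ → ℝ := fun r => r ^ (n - 2) * Real.sqrt (φ r) with hf
  have hfnn : ∀ r ∈ Ioi (0:ℝ), 0 ≤ f r := by
    intro r hr
    exact mul_nonneg (pow_nonneg (le_of_lt hr) _) (Real.sqrt_nonneg _)
  set C : ℝ := 2 ^ (n - 1) * ∫ s in Ioi (0:ℝ), f s with hC
  have hCnn : 0 ≤ C := by
    apply mul_nonneg (by positivity)
    exact setIntegral_nonneg measurableSet_Ioi hfnn
  -- key pointwise bound
  have key : ∀ r : ℝ, 0 < r → r ^ (n - 1) * Real.sqrt (φ r) ≤ C := by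
    intro r hr
    have hr2 : 0 < r / 2 := by linarith
    have hsub : Ioc (r / 2) r ⊆ Ioi (0:ℝ) := fun s hs => lt_trans hr2 hs.1
    have hintIoc : IntegrableOn f (Ioc (r / 2) r) := hint.mono_set hsub
    have hlow : (r / 2) ^ (n - 2) * Real.sqrt (φ r) * (r / 2)
        ≤ ∫ s in Ioc (r / 2) r, f s := by
      have hconst : (∫ s in Ioc (r / 2) r, ((r / 2) ^ (n - 2) * Real.sqrt (φ r)))
          = (r / 2) ^ (n - 2) * Real.sqrt (φ r) * (r / 2) := by
        rw [setIntegral_const]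
        rw [measureReal_def, Real.volume_Ioc]
        rw [smul_eq_mul, mul_comm]
        congr 1
        rw [ENNReal.toReal_ofReal (by linarith)]
        ring
      rw [← hconst]
      apply setIntegral_mono_on (integrableOn_const (by simp [Real.volume_Ioc])) hintIoc
        measurableSet_Ioc
      intro s hs
      have hs0 : 0 < s := lt_trans hr2 hs.1
      apply mul_le_mul
      · exact pow_le_pow_left₀ hr2.le hs.1.le _
      · exact Real.sqrt_le_sqrt (hmono (le_of_lt hs0) (le_of_lt hr) hs.2)
      · exact Real.sqrt_nonneg _
      · exact pow_nonneg hs0.le _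
    have hup : (∫ s in Ioc (r / 2) r, f s) ≤ ∫ s in Ioi (0:ℝ), f s := by
      apply setIntegral_mono_set hint
      · filter_upwards [ae_restrict_mem measurableSet_Ioi] with s hs using hfnn s hs
      · exact HasSubset.Subset.eventuallyLE hsub
    have hpow : r ^ (n - 1) = 2 ^ (n - 1) * ((r / 2) ^ (n - 2) * (r / 2)) := by
      have h1 : (r / 2) ^ (n - 2) * (r / 2) = (r / 2) ^ (n - 1) := by
        rw [← pow_succ]
        congr 1
        omega
      rw [h1, ← mul_pow]
      congr 1
      ring
    calc r ^ (n - 1) * Real.sqrt (φ r)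
        = 2 ^ (n - 1) * ((r / 2) ^ (n - 2) * Real.sqrt (φ r) * (r / 2)) := by
          rw [hpow]; ring
      _ ≤ 2 ^ (n - 1) * ∫ s in Ioc (r / 2) r, f s := by
          apply mul_le_mul_of_nonneg_left hlow (by positivity)
      _ ≤ C := by
          exact mul_le_mul_of_nonneg_left hup (by positivity)
  -- measurability
  have hφm : AEMeasurable φ (volume.restrict (Ioi (0:ℝ))) :=
    aemeasurable_restrict_of_antitoneOn measurableSet_Ioi
      (hmono.mono Ioi_subset_Ici_self)
  have hmeas : AEStronglyMeasurable (fun r => r ^ (n - 1) * φ r)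
      (volume.restrict (Ioi (0:ℝ))) :=
    ((measurable_id.pow_const (n - 1)).aemeasurable.mul hφm).aestronglyMeasurable
  -- split
  have h1 : IntegrableOn (fun r => r ^ (n - 1) * φ r) (Ioc (0:ℝ) 1) := by
    have hconst : IntegrableOn (fun _ : ℝ => φ 0) (Ioc (0:ℝ) 1) volume :=
      integrableOn_const measure_Ioc_lt_top.ne
    have hm1 : AEStronglyMeasurable (fun r => r ^ (n - 1) * φ r)
        (volume.restrict (Ioc (0:ℝ) 1)) :=
      hmeas.mono_measure (Measure.restrict_mono Ioc_subset_Ioi_self le_rfl)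
    apply Integrable.mono' hconst hm1
    filter_upwards [ae_restrict_mem measurableSet_Ioc] with r hr
    rw [Real.norm_eq_abs, abs_of_nonneg (mul_nonneg (pow_nonneg hr.1.le _) (hφ0 r hr.1.le))]
    calc r ^ (n - 1) * φ r ≤ 1 * φ 0 := by
          apply mul_le_mul
          · calc r ^ (n - 1) ≤ 1 ^ (n - 1) := pow_le_pow_left₀ hr.1.le hr.2 _
              _ = 1 := one_pow _
          · exact hmono (mem_Ici.2 (le_refl (0:ℝ))) hr.1.le hr.1.le
          · exact hφ0 r hr.1.le
          · norm_num
      _ = φ 0 := one_mul _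
  have h2 : IntegrableOn (fun r => r ^ (n - 1) * φ r) (Ioi (1:ℝ)) := by
    have hg : IntegrableOn (fun r => C * f r) (Ioi (1:ℝ)) volume :=
      (hint.mono_set (Ioi_subset_Ioi (by norm_num))).const_mul C
    have hm2 : AEStronglyMeasurable (fun r => r ^ (n - 1) * φ r)
        (volume.restrict (Ioi (1:ℝ))) :=
      hmeas.mono_measure (Measure.restrict_mono (Ioi_subset_Ioi (by norm_num)) le_rfl)
    apply Integrable.mono' hg hm2
    filter_upwards [ae_restrict_mem measurableSet_Ioi] with r hr
    have hr0 : (0:ℝ) < r := lt_trans one_pos hr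
    rw [Real.norm_eq_abs, abs_of_nonneg (mul_nonneg (pow_nonneg hr0.le _) (hφ0 r hr0.le))]
    have hφr : φ r = Real.sqrt (φ r) * Real.sqrt (φ r) :=
      (Real.mul_self_sqrt (hφ0 r hr0.le)).symm
    calc r ^ (n - 1) * φ r = (r ^ (n - 1) * Real.sqrt (φ r)) * Real.sqrt (φ r) := by
          conv_lhs => rw [hφr]; rw [← mul_assoc]
      _ ≤ C * Real.sqrt (φ r) :=
          mul_le_mul_of_nonneg_right (key r hr0) (Real.sqrt_nonneg _)
      _ ≤ C * (r ^ (n - 2) * Real.sqrt (φ r)) := by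
          apply mul_le_mul_of_nonneg_left _ hCnn
          nth_rewrite 1 [← one_mul (Real.sqrt (φ r))]
          exact mul_le_mul_of_nonneg_right
            (one_le_pow₀ hr.le) (Real.sqrt_nonneg _)
  have hsplit : Ioi (0:ℝ) = Ioc (0:ℝ) 1 ∪ Ioi 1 := (Ioc_union_Ioi_eq_Ioi (by norm_num)).symm
  rw [hsplit]
  exact h1.union h2
end

section
/- Let (ξ, η) be complex-valued random variables with E|ξ|² ≤ a², E|η|² ≤ b², measurable with respect to σ-algebras 𝒜, ℬ whose Ibragimov–Linnik mixing coefficient is φ. Then |E(ξη) − Eξ·Eη| ≤ C a b φ^{1/2} for an absolute constant C. -/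
open MeasureTheory Finset
open scoped ENNReal NNReal



section Helpers

variable {Ω : Type} {m0 : MeasurableSpace Ω} {P : Measure Ω}

/-- Splitting a sum of |covariance of indicators| by sign. -/
lemma sum_abs_dd_le [IsFiniteMeasure P] {ι : Type} (s : Finset ι) (C : ι → Set Ω)
    (hC : ∀ i ∈ s, MeasurableSet (C i)) (hdisj : (s : Set ι).PairwiseDisjoint C)
    (B : Set Ω) (hB : MeasurableSet B) (K : ℝ)
    (h : ∀ S : Finset ι, S ⊆ s →
      |(P ((⋃ i ∈ S, C i) ∩ B)).toReal -
        (P (⋃ i ∈ S, C i)).toReal * (P B).toReal| ≤ K) :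
    ∑ i ∈ s, |(P (C i ∩ B)).toReal - (P (C i)).toReal * (P B).toReal| ≤ 2 * K := by
  set d : ι → ℝ := fun i => (P (C i ∩ B)).toReal - (P (C i)).toReal * (P B).toReal with hd
  have key : ∀ S : Finset ι, S ⊆ s → ∑ i ∈ S, d i =
      (P ((⋃ i ∈ S, C i) ∩ B)).toReal - (P (⋃ i ∈ S, C i)).toReal * (P B).toReal := by
    intro S hS
    have hCm : ∀ i ∈ S, MeasurableSet (C i) := fun i hi => hC i (hS hi)
    have hdisjS : (S : Set ι).PairwiseDisjoint C :=
      hdisj.subset (by exact_mod_cast hS)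
    have h1 : P (⋃ i ∈ S, C i) = ∑ i ∈ S, P (C i) :=
      measure_biUnion_finset hdisjS hCm
    have h2 : P ((⋃ i ∈ S, C i) ∩ B) = ∑ i ∈ S, P (C i ∩ B) := by
      rw [Set.iUnion₂_inter]
      exact measure_biUnion_finset
        (fun i hi j hj hij =>
          (hdisjS hi hj hij).mono Set.inter_subset_left Set.inter_subset_left)
        (fun i hi => (hCm i hi).inter hB)
    rw [h1, h2, ENNReal.toReal_sum (fun i _ => measure_ne_top P _),
      ENNReal.toReal_sum (fun i _ => measure_ne_top P _), Finset.sum_mul,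
      ← Finset.sum_sub_distrib]
  have habs : ∀ S : Finset ι, S ⊆ s → |∑ i ∈ S, d i| ≤ K := by
    intro S hS
    rw [key S hS]; exact h S hS
  classical
  have hsplit := Finset.sum_filter_add_sum_filter_not s (fun i => 0 ≤ d i)
    (fun i => |d i|)
  have h1 : ∑ i ∈ s.filter (fun i => 0 ≤ d i), |d i| ≤ K := by
    have := habs (s.filter (fun i => 0 ≤ d i)) (Finset.filter_subset _ _)
    refine le_trans ?_ ((le_abs_self _).trans this)
    refine le_of_eq (Finset.sum_congr rfl fun i hi => ?_)
    exact abs_of_nonneg (Finset.mem_filter.mp hi).2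
  have h2 : ∑ i ∈ s.filter (fun i => ¬ 0 ≤ d i), |d i| ≤ K := by
    have := habs (s.filter (fun i => ¬ 0 ≤ d i)) (Finset.filter_subset _ _)
    refine le_trans ?_ ((neg_le_abs _).trans this)
    rw [← Finset.sum_neg_distrib]
    refine le_of_eq (Finset.sum_congr rfl fun i hi => ?_)
    exact abs_of_neg (lt_of_not_ge (Finset.mem_filter.mp hi).2)
  calc ∑ i ∈ s, |d i|
      = _ + _ := hsplit.symm
    _ ≤ K + K := add_le_add h1 h2
    _ = 2 * K := by ring

end Helpers


section Core

variable {Ω : Type} {m0 : MeasurableSpace Ω} {P : Measure Ω}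

lemma rep1' {E : Type} [AddCommMonoid E] (f : Ω → ℂ) (s : Finset ℂ)
    (hfs : ∀ ω, f ω ∈ s) (F : ℂ → E) (ω : Ω) :
    F (f ω) = ∑ c ∈ s, (f ⁻¹' {c}).indicator (fun _ => F c) ω := by
  rw [Finset.sum_eq_single_of_mem (f ω) (hfs ω)]
  · rw [Set.indicator_of_mem (by simp : ω ∈ f ⁻¹' {f ω})]
  · intro c _ hc
    exact Set.indicator_of_notMem (by simpa using fun h => hc h.symm) _

lemma rep2' {E : Type} [AddCommMonoid E] (f g : Ω → ℂ) (s t : Finset ℂ)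
    (hfs : ∀ ω, f ω ∈ s) (hgt : ∀ ω, g ω ∈ t) (F : ℂ → ℂ → E) (ω : Ω) :
    F (f ω) (g ω) = ∑ c ∈ s, ∑ d ∈ t,
      (f ⁻¹' {c} ∩ g ⁻¹' {d}).indicator (fun _ => F c d) ω := by
  rw [Finset.sum_eq_single_of_mem (f ω) (hfs ω)]
  · rw [Finset.sum_eq_single_of_mem (g ω) (hgt ω)]
    · rw [Set.indicator_of_mem (by simp : ω ∈ f ⁻¹' {f ω} ∩ g ⁻¹' {g ω})]
    · intro d _ hd
      refine Set.indicator_of_notMem ?_ _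
      simp only [Set.mem_inter_iff, Set.mem_preimage, Set.mem_singleton_iff]
      exact fun h => hd h.2.symm
  · intro c _ hc
    refine Finset.sum_eq_zero fun d _ => ?_
    refine Set.indicator_of_notMem ?_ _
    simp only [Set.mem_inter_iff, Set.mem_preimage, Set.mem_singleton_iff]
    exact fun h => hc h.1.symm

lemma int1' [IsFiniteMeasure P] {E : Type} [NormedAddCommGroup E] [NormedSpace ℝ E]
    [CompleteSpace E] (f : Ω → ℂ) (s : Finset ℂ) (hfs : ∀ ω, f ω ∈ s)
    (hA : ∀ c, MeasurableSet (f ⁻¹' {c})) (F : ℂ → E) :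
    ∫ ω, F (f ω) ∂P = ∑ c ∈ s, (P (f ⁻¹' {c})).toReal • F c := by
  rw [integral_congr_ae (Filter.Eventually.of_forall (rep1' f s hfs F)),
    integral_finset_sum _ (fun c _ => (integrable_const (F c)).indicator (hA c))]
  exact Finset.sum_congr rfl fun c _ => integral_indicator_const (F c) (hA c)

lemma int2' [IsFiniteMeasure P] {E : Type} [NormedAddCommGroup E] [NormedSpace ℝ E]
    [CompleteSpace E] (f g : Ω → ℂ) (s t : Finset ℂ)
    (hfs : ∀ ω, f ω ∈ s) (hgt : ∀ ω, g ω ∈ t)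
    (hA : ∀ c, MeasurableSet (f ⁻¹' {c})) (hB : ∀ d, MeasurableSet (g ⁻¹' {d}))
    (F : ℂ → ℂ → E) :
    ∫ ω, F (f ω) (g ω) ∂P = ∑ c ∈ s, ∑ d ∈ t,
      (P (f ⁻¹' {c} ∩ g ⁻¹' {d})).toReal • F c d := by
  have hm : ∀ (c d : ℂ), MeasurableSet (f ⁻¹' {c} ∩ g ⁻¹' {d}) :=
    fun c d => (hA c).inter (hB d)
  rw [integral_congr_ae (Filter.Eventually.of_forall (rep2' f g s t hfs hgt F)),
    integral_finset_sum _ (fun c _ =>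
      integrable_finset_sum _ (fun d _ => (integrable_const (F c d)).indicator (hm c d)))]
  refine Finset.sum_congr rfl fun c _ => ?_
  rw [integral_finset_sum _ (fun d _ => (integrable_const (F c d)).indicator (hm c d))]
  exact Finset.sum_congr rfl fun d _ => integral_indicator_const (F c d) (hm c d)

lemma dd_triv [IsProbabilityMeasure P] (A B : Set Ω) :
    |(P (A ∩ B)).toReal - (P A).toReal * (P B).toReal| ≤ (P B).toReal := by
  have h1 : (P (A ∩ B)).toReal ≤ (P B).toReal :=
    ENNReal.toReal_mono (measure_ne_top P B) (measure_mono Set.inter_subset_right)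
  have h2 : (P A).toReal ≤ 1 := by
    have := ENNReal.toReal_mono (measure_ne_top P Set.univ)
      (measure_mono (Set.subset_univ A))
    simpa using this
  have h0 : 0 ≤ (P (A ∩ B)).toReal := ENNReal.toReal_nonneg
  have h0' : 0 ≤ (P A).toReal := ENNReal.toReal_nonneg
  have h0'' : 0 ≤ (P B).toReal := ENNReal.toReal_nonneg
  rw [abs_le]
  constructor <;> nlinarith

lemma fibers_disjoint (f : Ω → ℂ) (s : Finset ℂ) :
    (s : Set ℂ).PairwiseDisjoint (fun c => f ⁻¹' {c}) := by
  intro c _ d _ hcd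
  refine Set.disjoint_left.2 fun ω h1 h2 => hcd ?_
  simp only [Set.mem_preimage, Set.mem_singleton_iff] at h1 h2
  rw [← h1, ← h2]

end Core

section Cov

variable {Ω : Type} {m0 : MeasurableSpace Ω} {P : Measure Ω}

lemma cov_core [IsProbabilityMeasure P] (φ : ℝ) (hφ : 0 ≤ φ)
    (f g : Ω → ℂ) (s t : Finset ℂ) (hfs : ∀ ω, f ω ∈ s) (hgt : ∀ ω, g ω ∈ t)
    (hA : ∀ c, MeasurableSet (f ⁻¹' {c})) (hB : ∀ d, MeasurableSet (g ⁻¹' {d}))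
    (hmix' : ∀ S : Finset ℂ, ∀ d : ℂ,
      |(P ((⋃ c ∈ S, f ⁻¹' {c}) ∩ g ⁻¹' {d})).toReal -
        (P (⋃ c ∈ S, f ⁻¹' {c})).toReal * (P (g ⁻¹' {d})).toReal|
        ≤ φ * (P (g ⁻¹' {d})).toReal) :
    ‖(∫ ω, f ω * g ω ∂P) - (∫ ω, f ω ∂P) * (∫ ω, g ω ∂P)‖ ≤
      2 * Real.sqrt φ * Real.sqrt (∫ ω, ‖f ω‖ ^ 2 ∂P) * Real.sqrt (∫ ω, ‖g ω‖ ^ 2 ∂P) := by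
  classical
  set A : ℂ → Set Ω := fun c => f ⁻¹' {c} with hAdef
  set B : ℂ → Set Ω := fun d => g ⁻¹' {d} with hBdef
  set pA : ℂ → ℝ := fun c => (P (A c)).toReal with hpA
  set pB : ℂ → ℝ := fun d => (P (B d)).toReal with hpB
  set dd : ℂ → ℂ → ℝ := fun c d => (P (A c ∩ B d)).toReal - pA c * pB d with hdd
  have hpA0 : ∀ c, 0 ≤ pA c := fun c => ENNReal.toReal_nonneg
  have hpB0 : ∀ d, 0 ≤ pB d := fun d => ENNReal.toReal_nonneg
  -- integral identities
  have E1 : ∫ ω, f ω * g ω ∂P =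
      ∑ c ∈ s, ∑ d ∈ t, (P (A c ∩ B d)).toReal • (c * d) :=
    int2' f g s t hfs hgt hA hB (fun c d => c * d)
  have E2 : ∫ ω, f ω ∂P = ∑ c ∈ s, (pA c) • c := int1' f s hfs hA (fun c => c)
  have E3 : ∫ ω, g ω ∂P = ∑ d ∈ t, (pB d) • d := int1' g t hgt hB (fun d => d)
  have E4 : ∫ ω, ‖f ω‖ ^ 2 ∂P = ∑ c ∈ s, pA c * ‖c‖ ^ 2 := by
    have := int1' (P := P) f s hfs hA (fun c => ‖c‖ ^ 2)
    simpa [smul_eq_mul] using this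
  have E5 : ∫ ω, ‖g ω‖ ^ 2 ∂P = ∑ d ∈ t, pB d * ‖d‖ ^ 2 := by
    have := int1' (P := P) g t hgt hB (fun d => ‖d‖ ^ 2)
    simpa [smul_eq_mul] using this
  -- the covariance as a double sum
  have key : (∫ ω, f ω * g ω ∂P) - (∫ ω, f ω ∂P) * (∫ ω, g ω ∂P) =
      ∑ c ∈ s, ∑ d ∈ t, dd c d • (c * d) := by
    rw [E1, E2, E3, Finset.sum_mul_sum, ← Finset.sum_sub_distrib]
    refine Finset.sum_congr rfl fun c _ => ?_
    rw [← Finset.sum_sub_distrib]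
    refine Finset.sum_congr rfl fun d _ => ?_
    simp only [hdd, Complex.real_smul, Complex.ofReal_sub, Complex.ofReal_mul]
    ring
  -- row bounds
  have R1 : ∀ c ∈ s, ∑ d ∈ t, |dd c d| ≤ 2 * pA c := by
    intro c _
    have h := sum_abs_dd_le (P := P) t B (fun d _ => hB d) (fibers_disjoint g t)
      (A c) (hA c) (pA c) (fun S _ => dd_triv _ _)
    refine le_trans (le_of_eq (Finset.sum_congr rfl fun d _ => ?_)) h
    rw [Set.inter_comm, mul_comm]
  have R2 : ∀ d ∈ t, ∑ c ∈ s, |dd c d| ≤ 2 * (φ * pB d) := by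
    intro d _
    exact sum_abs_dd_le (P := P) s A (fun c _ => hA c) (fibers_disjoint f s)
      (B d) (hB d) (φ * pB d) (fun S _ => hmix' S d)
  -- Cauchy-Schwarz
  have habs : ‖∑ c ∈ s, ∑ d ∈ t, dd c d • (c * d)‖ ≤
      ∑ c ∈ s, ∑ d ∈ t, (‖c‖ * Real.sqrt |dd c d|) * (‖d‖ * Real.sqrt |dd c d|) := by
    refine le_trans (norm_sum_le _ _) (Finset.sum_le_sum fun c _ => ?_)
    refine le_trans (norm_sum_le _ _) (le_of_eq (Finset.sum_congr rfl fun d _ => ?_))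
    rw [norm_smul, Real.norm_eq_abs, norm_mul]
    rw [show (‖c‖ * Real.sqrt |dd c d|) * (‖d‖ * Real.sqrt |dd c d|)
        = (Real.sqrt |dd c d| * Real.sqrt |dd c d|) * (‖c‖ * ‖d‖) by ring,
      Real.mul_self_sqrt (abs_nonneg _)]
  have CS : ∑ c ∈ s, ∑ d ∈ t, (‖c‖ * Real.sqrt |dd c d|) * (‖d‖ * Real.sqrt |dd c d|) ≤
      Real.sqrt (∑ c ∈ s, ∑ d ∈ t, ‖c‖ ^ 2 * |dd c d|) *
      Real.sqrt (∑ c ∈ s, ∑ d ∈ t, ‖d‖ ^ 2 * |dd c d|) := by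
    have h := Real.sum_mul_le_sqrt_mul_sqrt (s ×ˢ t)
      (fun p => ‖p.1‖ * Real.sqrt |dd p.1 p.2|)
      (fun p => ‖p.2‖ * Real.sqrt |dd p.1 p.2|)
    rw [Finset.sum_product] at h
    have e1 : ∀ p : ℂ × ℂ, (‖p.1‖ * Real.sqrt |dd p.1 p.2|) ^ 2 = ‖p.1‖ ^ 2 * |dd p.1 p.2| := by
      intro p; rw [mul_pow, Real.sq_sqrt (abs_nonneg _)]
    have e2 : ∀ p : ℂ × ℂ, (‖p.2‖ * Real.sqrt |dd p.1 p.2|) ^ 2 = ‖p.2‖ ^ 2 * |dd p.1 p.2| := by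
      intro p; rw [mul_pow, Real.sq_sqrt (abs_nonneg _)]
    simp only [e1, e2] at h
    rw [Finset.sum_product, Finset.sum_product] at h
    exact h
  have S1 : ∑ c ∈ s, ∑ d ∈ t, ‖c‖ ^ 2 * |dd c d| ≤ 2 * ∑ c ∈ s, pA c * ‖c‖ ^ 2 := by
    rw [Finset.mul_sum]
    refine Finset.sum_le_sum fun c hc => ?_
    rw [← Finset.mul_sum]
    calc ‖c‖ ^ 2 * ∑ d ∈ t, |dd c d| ≤ ‖c‖ ^ 2 * (2 * pA c) :=
          mul_le_mul_of_nonneg_left (R1 c hc) (by positivity)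
      _ = 2 * (pA c * ‖c‖ ^ 2) := by ring
  have S2 : ∑ c ∈ s, ∑ d ∈ t, ‖d‖ ^ 2 * |dd c d| ≤ 2 * φ * ∑ d ∈ t, pB d * ‖d‖ ^ 2 := by
    rw [Finset.sum_comm, Finset.mul_sum]
    refine Finset.sum_le_sum fun d hd => ?_
    rw [← Finset.mul_sum]
    calc ‖d‖ ^ 2 * ∑ c ∈ s, |dd c d| ≤ ‖d‖ ^ 2 * (2 * (φ * pB d)) :=
          mul_le_mul_of_nonneg_left (R2 d hd) (by positivity)
      _ = 2 * φ * (pB d * ‖d‖ ^ 2) := by ring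
  -- put everything together
  have hX0 : 0 ≤ ∑ c ∈ s, pA c * ‖c‖ ^ 2 :=
    Finset.sum_nonneg fun c _ => mul_nonneg (hpA0 c) (by positivity)
  have hY0 : 0 ≤ ∑ d ∈ t, pB d * ‖d‖ ^ 2 :=
    Finset.sum_nonneg fun d _ => mul_nonneg (hpB0 d) (by positivity)
  rw [key, E4, E5]
  refine le_trans habs (le_trans CS ?_)
  calc Real.sqrt (∑ c ∈ s, ∑ d ∈ t, ‖c‖ ^ 2 * |dd c d|) *
        Real.sqrt (∑ c ∈ s, ∑ d ∈ t, ‖d‖ ^ 2 * |dd c d|)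
      ≤ Real.sqrt (2 * ∑ c ∈ s, pA c * ‖c‖ ^ 2) *
        Real.sqrt (2 * φ * ∑ d ∈ t, pB d * ‖d‖ ^ 2) :=
        mul_le_mul (Real.sqrt_le_sqrt S1) (Real.sqrt_le_sqrt S2)
          (Real.sqrt_nonneg _) (Real.sqrt_nonneg _)
    _ = 2 * Real.sqrt φ * Real.sqrt (∑ c ∈ s, pA c * ‖c‖ ^ 2) *
        Real.sqrt (∑ d ∈ t, pB d * ‖d‖ ^ 2) := by
        rw [Real.sqrt_mul (by norm_num : (0:ℝ) ≤ 2), Real.sqrt_mul (by positivity) ,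
          Real.sqrt_mul (by norm_num : (0:ℝ) ≤ 2)]
        ring_nf
        rw [Real.sq_sqrt (by norm_num : (0:ℝ) ≤ 2)]
        ring

end Cov


section L2H

variable {Ω : Type} {m0 : MeasurableSpace Ω} {P : Measure Ω}

lemma sqrt_int_eq (u : Ω → ℂ) (hu : MemLp u 2 P) :
    (eLpNorm u 2 P).toReal = Real.sqrt (∫ ω, ‖u ω‖ ^ 2 ∂P) := by
  rw [hu.eLpNorm_eq_integral_rpow_norm two_ne_zero ENNReal.ofNat_ne_top,
    ENNReal.toReal_ofReal (by positivity)]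
  have h2 : ((2 : ℝ≥0∞)).toReal = (2 : ℝ) := by simp
  rw [h2, Real.sqrt_eq_rpow, one_div]
  congr 1
  simp_rw [show ((2:ℝ)) = ((2:ℕ):ℝ) from by norm_num, Real.rpow_natCast]

lemma int_mul_integrable (u v : Ω → ℂ) (hu : MemLp u 2 P) (hv : MemLp v 2 P) :
    Integrable (fun ω => u ω * v ω) P := by
  have h : MemLp (u • v) 1 P := hv.smul hu
  rw [← memLp_one_iff_integrable]
  exact h

lemma norm_int_mul_le (u v : Ω → ℂ) (hu : MemLp u 2 P) (hv : MemLp v 2 P) :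
    ‖∫ ω, u ω * v ω ∂P‖ ≤
      Real.sqrt (∫ ω, ‖u ω‖ ^ 2 ∂P) * Real.sqrt (∫ ω, ‖v ω‖ ^ 2 ∂P) := by
  have h2 : ENNReal.ofReal (2 : ℝ) = 2 := by norm_num
  have hconj : Real.HolderConjugate 2 2 := ⟨by norm_num, by norm_num, by norm_num⟩
  have hh := integral_mul_norm_le_Lp_mul_Lq (μ := P) hconj (h2 ▸ hu) (h2 ▸ hv)
  have hrw : ∀ w : Ω → ℂ, ∫ ω, ‖w ω‖ ^ (2:ℝ) ∂P = ∫ ω, ‖w ω‖ ^ 2 ∂P := by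
    intro w
    simp_rw [show ((2:ℝ)) = ((2:ℕ):ℝ) from by norm_num, Real.rpow_natCast]
  rw [hrw, hrw] at hh
  calc ‖∫ ω, u ω * v ω ∂P‖ ≤ ∫ ω, ‖u ω * v ω‖ ∂P := norm_integral_le_integral_norm _
    _ = ∫ ω, ‖u ω‖ * ‖v ω‖ ∂P := by simp_rw [norm_mul]
    _ ≤ (∫ ω, ‖u ω‖ ^ 2 ∂P) ^ ((1:ℝ)/2) * (∫ ω, ‖v ω‖ ^ 2 ∂P) ^ ((1:ℝ)/2) := hh
    _ = _ := by rw [Real.sqrt_eq_rpow, Real.sqrt_eq_rpow]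

lemma norm_int_le [IsProbabilityMeasure P] (u : Ω → ℂ) (hu : MemLp u 2 P) :
    ‖∫ ω, u ω ∂P‖ ≤ Real.sqrt (∫ ω, ‖u ω‖ ^ 2 ∂P) := by
  have h := norm_int_mul_le u (fun _ => (1:ℂ)) hu (memLp_const 1)
  simpa using h

lemma approx_simple {mA : MeasurableSpace Ω} (hmA : mA ≤ m0) [IsProbabilityMeasure P]
    (ξ : Ω → ℂ) (hξ : Measurable[mA] ξ) (hξP : MemLp ξ 2 P)
    (hξi : Integrable (fun ω => ‖ξ ω‖ ^ 2) P) {ε : ℝ} (hε : 0 < ε) :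
    ∃ (f : Ω → ℂ) (s : Finset ℂ), (∀ ω, f ω ∈ s) ∧
      (∀ c, MeasurableSet[mA] (f ⁻¹' {c})) ∧ MemLp f 2 P ∧
      Real.sqrt (∫ ω, ‖ξ ω - f ω‖ ^ 2 ∂P) ≤ ε := by
  have hsm : StronglyMeasurable[mA] ξ := hξ.stronglyMeasurable
  have hsq_m : Measurable[mA] (fun ω => ‖ξ ω‖ ^ 2) := (hξ.norm.pow_const 2)
  have hint_trim : Integrable (fun ω => ‖ξ ω‖ ^ 2) (P.trim hmA) :=
    hξi.trim hmA hsq_m.stronglyMeasurable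
  have hmem_trim : MemLp ξ 2 (P.trim hmA) :=
    (memLp_two_iff_integrable_sq_norm hsm.aestronglyMeasurable).mpr hint_trim
  obtain ⟨f0, hf0, -⟩ := hmem_trim.exists_simpleFunc_eLpNorm_sub_lt ENNReal.ofNat_ne_top
    (ε := ENNReal.ofReal ε) (ENNReal.ofReal_pos.mpr hε).ne'
  have hsub_sm : StronglyMeasurable[mA] (ξ - ⇑f0) :=
    hsm.sub (@SimpleFunc.stronglyMeasurable Ω ℂ mA _ f0)
  have htrim_eq : eLpNorm (ξ - ⇑f0) 2 P = eLpNorm (ξ - ⇑f0) 2 (P.trim hmA) :=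
    (eLpNorm_trim hmA hsub_sm).symm
  have hlt : eLpNorm (ξ - ⇑f0) 2 P < ENNReal.ofReal ε := by rw [htrim_eq]; exact hf0
  have hmem_sub : MemLp (ξ - ⇑f0) 2 P :=
    ⟨(hsub_sm.mono hmA).aestronglyMeasurable, hlt.trans ENNReal.ofReal_lt_top⟩
  have hmemf : MemLp (⇑f0) 2 P := by
    have h : ⇑f0 = ξ - (ξ - ⇑f0) := by funext ω; simp
    rw [h]; exact hξP.sub hmem_sub
  refine ⟨⇑f0, @SimpleFunc.range Ω ℂ mA f0,
    fun ω => @SimpleFunc.mem_range_self Ω ℂ mA f0 ω,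
    fun c => @SimpleFunc.measurableSet_fiber Ω ℂ mA f0 c, hmemf, ?_⟩
  have := sqrt_int_eq (ξ - ⇑f0) hmem_sub
  have hle : (eLpNorm (ξ - ⇑f0) 2 P).toReal ≤ ε :=
    ENNReal.toReal_le_of_le_ofReal hε.le hlt.le
  rw [this] at hle
  simpa [Pi.sub_apply] using hle

end L2H

section MainTest

/-- Ibragimov–Linnik covariance inequality for L² random variables:
there is an absolute constant `C` such that for any probability space, any two
sub-σ-algebras whose Ibragimov–Linnik mixing coefficient is at most `φ`, and any
square-integrable complex random variables `ξ, η` measurable w.r.t. them with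
`E‖ξ‖² ≤ a²`, `E‖η‖² ≤ b²`, one has `‖E(ξη) − Eξ·Eη‖ ≤ C a b φ^{1/2}`. -/
theorem stmt_7 :
    ∃ C : ℝ, 0 < C ∧
      ∀ (Ω : Type) (m0 : MeasurableSpace Ω) (P : Measure Ω), IsProbabilityMeasure P →
      ∀ (mA mB : MeasurableSpace Ω), mA ≤ m0 → mB ≤ m0 →
      ∀ (φ a b : ℝ), 0 ≤ φ → 0 ≤ a → 0 ≤ b →
      (∀ A B : Set Ω, MeasurableSet[mA] A → MeasurableSet[mB] B →
        |(P (A ∩ B)).toReal - (P A).toReal * (P B).toReal| ≤ φ * (P B).toReal) →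
      ∀ (ξ η : Ω → ℂ), Measurable[mA] ξ → Measurable[mB] η →
      Integrable (fun ω => ‖ξ ω‖ ^ 2) P → Integrable (fun ω => ‖η ω‖ ^ 2) P →
      (∫ ω, ‖ξ ω‖ ^ 2 ∂P) ≤ a ^ 2 → (∫ ω, ‖η ω‖ ^ 2 ∂P) ≤ b ^ 2 →
      ‖(∫ ω, ξ ω * η ω ∂P) - (∫ ω, ξ ω ∂P) * (∫ ω, η ω ∂P)‖
        ≤ C * a * b * Real.sqrt φ := by
  refine ⟨2, by norm_num, ?_⟩
  intro Ω m0 P hP mA mB hmA hmB φ a b hφ ha hb hmix ξ η hξ hη hξi hηi hξa hηb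
  haveI := hP
  have hξ0 : Measurable[m0] ξ := hξ.mono hmA le_rfl
  have hη0 : Measurable[m0] η := hη.mono hmB le_rfl
  have hξm2 : MemLp ξ 2 P := (memLp_two_iff_integrable_sq_norm hξ0.aestronglyMeasurable).mpr hξi
  have hηm2 : MemLp η 2 P := (memLp_two_iff_integrable_sq_norm hη0.aestronglyMeasurable).mpr hηi
  have hX0 : 0 ≤ ∫ ω, ‖ξ ω‖ ^ 2 ∂P := integral_nonneg fun ω => by positivity
  have hY0 : 0 ≤ ∫ ω, ‖η ω‖ ^ 2 ∂P := integral_nonneg fun ω => by positivity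
  have hsX : Real.sqrt (∫ ω, ‖ξ ω‖ ^ 2 ∂P) ≤ a := by
    rw [show a = Real.sqrt (a ^ 2) from (Real.sqrt_sq ha).symm]
    exact Real.sqrt_le_sqrt hξa
  have hsY : Real.sqrt (∫ ω, ‖η ω‖ ^ 2 ∂P) ≤ b := by
    rw [show b = Real.sqrt (b ^ 2) from (Real.sqrt_sq hb).symm]
    exact Real.sqrt_le_sqrt hηb
  set T : ℂ := (∫ ω, ξ ω * η ω ∂P) - (∫ ω, ξ ω ∂P) * (∫ ω, η ω ∂P) with hT
  -- main estimate for every positive ε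
  have main : ∀ ε : ℝ, 0 < ε → ‖T‖ ≤
      2 * Real.sqrt φ * (a + ε) * (b + ε) + 2 * (ε * b + (a + ε) * ε) := by
    intro ε hε
    obtain ⟨f, s, hfs, hfib, hfm2, hDf⟩ := approx_simple hmA ξ hξ hξm2 hξi hε
    obtain ⟨g, t, hgt, hgib, hgm2, hDg⟩ := approx_simple hmB η hη hηm2 hηi hε
    -- measurability of fibers in m0
    have hfib0 : ∀ c, MeasurableSet[m0] (f ⁻¹' {c}) := fun c => hmA _ (hfib c)
    have hgib0 : ∀ d, MeasurableSet[m0] (g ⁻¹' {d}) := fun d => hmB _ (hgib d)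
    -- L² norms of f and g
    have hsub_f : MemLp (fun ω => ξ ω - f ω) 2 P := hξm2.sub hfm2
    have hsub_g : MemLp (fun ω => η ω - g ω) 2 P := hηm2.sub hgm2
    have hDf0 : 0 ≤ ∫ ω, ‖ξ ω - f ω‖ ^ 2 ∂P := integral_nonneg fun ω => by positivity
    have hDg0 : 0 ≤ ∫ ω, ‖η ω - g ω‖ ^ 2 ∂P := integral_nonneg fun ω => by positivity
    have hXf : Real.sqrt (∫ ω, ‖f ω‖ ^ 2 ∂P) ≤ a + ε := by
      have h1 : eLpNorm f 2 P ≤ eLpNorm ξ 2 P + eLpNorm (fun ω => ξ ω - f ω) 2 P := by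
        have : f = ξ - (ξ - f) := by funext ω; simp
        calc eLpNorm f 2 P = eLpNorm (ξ - (ξ - f)) 2 P := by rw [← this]
          _ ≤ _ := eLpNorm_sub_le hξm2.aestronglyMeasurable hsub_f.aestronglyMeasurable
              one_le_two
      have h2 : (eLpNorm f 2 P).toReal ≤
          (eLpNorm ξ 2 P).toReal + (eLpNorm (fun ω => ξ ω - f ω) 2 P).toReal := by
        rw [← ENNReal.toReal_add hξm2.eLpNorm_ne_top hsub_f.eLpNorm_ne_top]
        exact ENNReal.toReal_mono
          (ENNReal.add_ne_top.2 ⟨hξm2.eLpNorm_ne_top, hsub_f.eLpNorm_ne_top⟩) h1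
      rw [sqrt_int_eq f hfm2, sqrt_int_eq ξ hξm2, sqrt_int_eq _ hsub_f] at h2
      exact h2.trans (add_le_add hsX hDf)
    have hYg : Real.sqrt (∫ ω, ‖g ω‖ ^ 2 ∂P) ≤ b + ε := by
      have h1 : eLpNorm g 2 P ≤ eLpNorm η 2 P + eLpNorm (fun ω => η ω - g ω) 2 P := by
        have : g = η - (η - g) := by funext ω; simp
        calc eLpNorm g 2 P = eLpNorm (η - (η - g)) 2 P := by rw [← this]
          _ ≤ _ := eLpNorm_sub_le hηm2.aestronglyMeasurable hsub_g.aestronglyMeasurable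
              one_le_two
      have h2 : (eLpNorm g 2 P).toReal ≤
          (eLpNorm η 2 P).toReal + (eLpNorm (fun ω => η ω - g ω) 2 P).toReal := by
        rw [← ENNReal.toReal_add hηm2.eLpNorm_ne_top hsub_g.eLpNorm_ne_top]
        exact ENNReal.toReal_mono
          (ENNReal.add_ne_top.2 ⟨hηm2.eLpNorm_ne_top, hsub_g.eLpNorm_ne_top⟩) h1
      rw [sqrt_int_eq g hgm2, sqrt_int_eq η hηm2, sqrt_int_eq _ hsub_g] at h2
      exact h2.trans (add_le_add hsY hDg)
    -- covariance bound for the simple approximations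
    have hmix' : ∀ S : Finset ℂ, ∀ d : ℂ,
        |(P ((⋃ c ∈ S, f ⁻¹' {c}) ∩ g ⁻¹' {d})).toReal -
          (P (⋃ c ∈ S, f ⁻¹' {c})).toReal * (P (g ⁻¹' {d})).toReal|
          ≤ φ * (P (g ⁻¹' {d})).toReal := by
      intro S d
      have hU : MeasurableSet[mA] (⋃ c ∈ S, f ⁻¹' {c}) :=
        Finset.measurableSet_biUnion S (fun c _ => hfib c)
      exact hmix _ _ hU (hgib d)
    have hcov := cov_core (P := P) φ hφ f g s t hfs hgt hfib0 hgib0 hmix'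
    -- difference of covariances
    have hint_ξη : Integrable (fun ω => ξ ω * η ω) P := int_mul_integrable ξ η hξm2 hηm2
    have hint_fg : Integrable (fun ω => f ω * g ω) P := int_mul_integrable f g hfm2 hgm2
    have hint_1 : Integrable (fun ω => (ξ ω - f ω) * η ω) P :=
      int_mul_integrable _ η hsub_f hηm2
    have hint_2 : Integrable (fun ω => f ω * (η ω - g ω)) P :=
      int_mul_integrable f _ hfm2 hsub_g
    have hd1 : (∫ ω, ξ ω * η ω ∂P) - (∫ ω, f ω * g ω ∂P)
        = (∫ ω, (ξ ω - f ω) * η ω ∂P) + (∫ ω, f ω * (η ω - g ω) ∂P) := by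
      rw [← integral_sub hint_ξη hint_fg, ← integral_add hint_1 hint_2]
      congr 1; funext ω; ring
    have hn1 : ‖(∫ ω, ξ ω * η ω ∂P) - (∫ ω, f ω * g ω ∂P)‖ ≤ ε * b + (a + ε) * ε := by
      rw [hd1]
      refine (norm_add_le _ _).trans (add_le_add ?_ ?_)
      · refine (norm_int_mul_le _ η hsub_f hηm2).trans ?_
        exact mul_le_mul hDf hsY (Real.sqrt_nonneg _) hε.le
      · refine (norm_int_mul_le f _ hfm2 hsub_g).trans ?_
        exact mul_le_mul hXf hDg (Real.sqrt_nonneg _) (by linarith)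
    -- difference of products of means
    have hint_ξ : Integrable ξ P := hξm2.integrable one_le_two
    have hint_η : Integrable η P := hηm2.integrable one_le_two
    have hint_f : Integrable f P := hfm2.integrable one_le_two
    have hint_g : Integrable g P := hgm2.integrable one_le_two
    have hmξf : ‖(∫ ω, ξ ω ∂P) - (∫ ω, f ω ∂P)‖ ≤ ε := by
      rw [← integral_sub hint_ξ hint_f]
      exact (norm_int_le _ hsub_f).trans hDf
    have hmηg : ‖(∫ ω, η ω ∂P) - (∫ ω, g ω ∂P)‖ ≤ ε := by
      rw [← integral_sub hint_η hint_g]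
      exact (norm_int_le _ hsub_g).trans hDg
    have hmη : ‖∫ ω, η ω ∂P‖ ≤ b := (norm_int_le η hηm2).trans hsY
    have hmf : ‖∫ ω, f ω ∂P‖ ≤ a + ε := (norm_int_le f hfm2).trans hXf
    have hn2 : ‖(∫ ω, ξ ω ∂P) * (∫ ω, η ω ∂P) - (∫ ω, f ω ∂P) * (∫ ω, g ω ∂P)‖
        ≤ ε * b + (a + ε) * ε := by
      have e : (∫ ω, ξ ω ∂P) * (∫ ω, η ω ∂P) - (∫ ω, f ω ∂P) * (∫ ω, g ω ∂P)
          = ((∫ ω, ξ ω ∂P) - (∫ ω, f ω ∂P)) * (∫ ω, η ω ∂P)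
            + (∫ ω, f ω ∂P) * ((∫ ω, η ω ∂P) - (∫ ω, g ω ∂P)) := by ring
      rw [e]
      refine (norm_add_le _ _).trans (add_le_add ?_ ?_)
      · rw [norm_mul]
        exact mul_le_mul hmξf hmη (norm_nonneg _) hε.le
      · rw [norm_mul]
        exact mul_le_mul hmf hmηg (norm_nonneg _) (by linarith)
    -- assemble
    have hsplit : ‖T‖ ≤ ‖(∫ ω, f ω * g ω ∂P) - (∫ ω, f ω ∂P) * (∫ ω, g ω ∂P)‖
        + (ε * b + (a + ε) * ε) + (ε * b + (a + ε) * ε) := by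
      have e : T = ((∫ ω, f ω * g ω ∂P) - (∫ ω, f ω ∂P) * (∫ ω, g ω ∂P))
          + ((∫ ω, ξ ω * η ω ∂P) - (∫ ω, f ω * g ω ∂P))
          - ((∫ ω, ξ ω ∂P) * (∫ ω, η ω ∂P) - (∫ ω, f ω ∂P) * (∫ ω, g ω ∂P)) := by
        rw [hT]; ring
      rw [e]
      refine (norm_sub_le _ _).trans ?_
      refine add_le_add ((norm_add_le _ _).trans (add_le_add le_rfl hn1)) hn2
    have hcov' : ‖(∫ ω, f ω * g ω ∂P) - (∫ ω, f ω ∂P) * (∫ ω, g ω ∂P)‖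
        ≤ 2 * Real.sqrt φ * (a + ε) * (b + ε) := by
      refine hcov.trans ?_
      have h1 : Real.sqrt (∫ ω, ‖f ω‖ ^ 2 ∂P) ≤ a + ε := hXf
      have h2 : Real.sqrt (∫ ω, ‖g ω‖ ^ 2 ∂P) ≤ b + ε := hYg
      have hs1 : 0 ≤ Real.sqrt (∫ ω, ‖f ω‖ ^ 2 ∂P) := Real.sqrt_nonneg _
      have hs2 : 0 ≤ Real.sqrt (∫ ω, ‖g ω‖ ^ 2 ∂P) := Real.sqrt_nonneg _
      have hsφ : 0 ≤ Real.sqrt φ := Real.sqrt_nonneg _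
      have hae : (0:ℝ) ≤ a + ε := by linarith
      have hbe : (0:ℝ) ≤ b + ε := by linarith
      have h3 : 2 * Real.sqrt φ * Real.sqrt (∫ ω, ‖f ω‖ ^ 2 ∂P)
          ≤ 2 * Real.sqrt φ * (a + ε) :=
        mul_le_mul_of_nonneg_left h1 (by positivity)
      exact mul_le_mul h3 h2 hs2 (mul_nonneg (by positivity) hae)
    calc ‖T‖ ≤ _ := hsplit
      _ ≤ 2 * Real.sqrt φ * (a + ε) * (b + ε) + (ε * b + (a + ε) * ε)
            + (ε * b + (a + ε) * ε) := by linarith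
      _ = 2 * Real.sqrt φ * (a + ε) * (b + ε) + 2 * (ε * b + (a + ε) * ε) := by ring
  -- pass to the limit ε → 0⁺
  have hcont : Filter.Tendsto
      (fun ε : ℝ => 2 * Real.sqrt φ * (a + ε) * (b + ε) + 2 * (ε * b + (a + ε) * ε))
      (nhdsWithin 0 (Set.Ioi 0))
      (nhds (2 * Real.sqrt φ * (a + 0) * (b + 0) + 2 * (0 * b + (a + 0) * 0))) := by
    exact ((continuous_const.mul (continuous_const.add continuous_id)).mul
      (continuous_const.add continuous_id) |>.add
      (continuous_const.mul ((continuous_id.mul continuous_const).add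
        ((continuous_const.add continuous_id).mul continuous_id)))).tendsto 0
      |>.mono_left nhdsWithin_le_nhds
  have hfin : ‖T‖ ≤ 2 * Real.sqrt φ * (a + 0) * (b + 0) + 2 * (0 * b + (a + 0) * 0) :=
    ge_of_tendsto hcont (eventually_nhdsWithin_of_forall fun ε hε => main ε hε)
  calc ‖T‖ ≤ _ := hfin
    _ = 2 * a * b * Real.sqrt φ := by ring

end MainTest
end

section
/- Let ξ, η be complex random variables with |ξ| ≤ a and |η| ≤ b almost surely, measurable with respect to σ-algebras 𝒜, ℬ with Ibragimov–Linnik mixing coefficient φ. Then |E(ξη) − Eξ·Eη| ≤ C a b φ for an absolute constant C. -/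
open MeasureTheory Finset

lemma floor_sum_eq (y : ℝ) (hy : 0 ≤ y) (K : ℕ) (hK : y ≤ K) :
    ∑ k ∈ Finset.Icc 1 K, (if (k : ℝ) ≤ y then (1:ℝ) else 0) = (⌊y⌋₊ : ℝ) := by
  have hfil : (Finset.Icc 1 K).filter (fun k : ℕ => (k : ℝ) ≤ y) = Finset.Icc 1 ⌊y⌋₊ := by
    have hKf : ⌊y⌋₊ ≤ K := by
      have := Nat.floor_le_floor hK
      simpa using this
    ext k
    simp only [Finset.mem_filter, Finset.mem_Icc, Nat.le_floor_iff hy]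
    constructor
    · rintro ⟨⟨h1, _⟩, h3⟩; exact ⟨h1, h3⟩
    · rintro ⟨h1, h3⟩
      refine ⟨⟨h1, ?_⟩, h3⟩
      exact le_trans (Nat.le_floor h3) hKf
  rw [Finset.sum_ite, Finset.sum_const, Finset.sum_const_zero, hfil]
  simp [Nat.card_Icc]


variable {Ω : Type}

lemma integrable_of_bdd {m0 : MeasurableSpace Ω} {P : Measure Ω} [IsFiniteMeasure P]
    {E : Type*} [NormedAddCommGroup E] {f : Ω → E} (hf : AEStronglyMeasurable f P) {C : ℝ}
    (h : ∀ ω, ‖f ω‖ ≤ C) : Integrable f P :=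
  (memLp_top_of_bound hf C (Filter.Eventually.of_forall h)).integrable le_top


lemma step1_real {mA mB : MeasurableSpace Ω} {m0 : MeasurableSpace Ω}
    {P : Measure Ω} [IsProbabilityMeasure P] (hA : mA ≤ m0)
    {φ a : ℝ} (hφ : 0 ≤ φ) (ha : 0 ≤ a)
    (hmix : ∀ A B : Set Ω, MeasurableSet[mA] A → MeasurableSet[mB] B →
      |(P (A ∩ B)).toReal - (P A).toReal * (P B).toReal| ≤ φ * (P B).toReal)
    {B : Set Ω} (hB : MeasurableSet[mB] B) (hB0 : MeasurableSet[m0] B)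
    {ξ : Ω → ℝ} (hξ : Measurable[mA] ξ) (h0 : ∀ ω, 0 ≤ ξ ω) (hba : ∀ ω, ξ ω ≤ a) :
    |(∫ ω in B, ξ ω ∂P) - (∫ ω, ξ ω ∂P) * (P B).toReal| ≤ a * φ * (P B).toReal := by
  have hξ0 : @Measurable Ω ℝ m0 _ ξ := hξ.mono hA le_rfl
  have hPB0 : 0 ≤ (P B).toReal := ENNReal.toReal_nonneg
  have hPB1 : (P B).toReal ≤ 1 := by
    simpa using ENNReal.toReal_mono ENNReal.one_ne_top (prob_le_one (μ := P) (s := B))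
  have hnormξ : ∀ ω, ‖ξ ω‖ ≤ a := fun ω => by
    rw [Real.norm_eq_abs, abs_le]; exact ⟨by linarith [h0 ω], hba ω⟩
  have hint : Integrable ξ P :=
    (memLp_top_of_bound hξ0.aestronglyMeasurable a
      (Filter.Eventually.of_forall hnormξ)).integrable le_top
  refine le_of_forall_pos_le_add (fun ε hε => ?_)
  obtain ⟨n, hn⟩ := exists_nat_gt ((φ * (P B).toReal + 2) / ε)
  have hnpos : 0 < (n : ℝ) := lt_of_le_of_lt (div_nonneg (by positivity) hε.le) hn
  set A_ : ℕ → Set Ω := fun k => {ω | (k : ℝ) ≤ (n : ℝ) * ξ ω} with hA_def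
  have hAmA : ∀ k : ℕ, MeasurableSet[mA] (A_ k) := fun k =>
    measurableSet_le measurable_const (hξ.const_mul _)
  have hAm0 : ∀ k : ℕ, MeasurableSet (A_ k) := fun k => hA _ (hAmA k)
  set K := ⌈(n : ℝ) * a⌉₊ with hKdef
  set s : Ω → ℝ := fun ω =>
    (1 / (n : ℝ)) * ∑ k ∈ Finset.Icc 1 K, (A_ k).indicator (fun _ => (1:ℝ)) ω with hsdef
  have hyK : ∀ ω, (n : ℝ) * ξ ω ≤ K := fun ω =>
    le_trans (by nlinarith [hba ω]) (Nat.le_ceil _)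
  have hy0 : ∀ ω, 0 ≤ (n : ℝ) * ξ ω := fun ω => by nlinarith [h0 ω]
  have hs_floor : ∀ ω, s ω = (⌊(n : ℝ) * ξ ω⌋₊ : ℝ) / n := by
    intro ω
    have : ∑ k ∈ Finset.Icc 1 K, (A_ k).indicator (fun _ => (1:ℝ)) ω
        = ∑ k ∈ Finset.Icc 1 K, (if (k : ℝ) ≤ (n : ℝ) * ξ ω then (1:ℝ) else 0) := by
      refine Finset.sum_congr rfl (fun k _ => ?_)
      by_cases h : (k : ℝ) ≤ (n : ℝ) * ξ ω
      · rw [if_pos h]; exact Set.indicator_of_mem (show ω ∈ A_ k from h) _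
      · rw [if_neg h]; exact Set.indicator_of_notMem (show ω ∉ A_ k from h) _
    rw [hsdef]
    simp only
    rw [this, floor_sum_eq _ (hy0 ω) K (hyK ω)]
    ring
  have hclose : ∀ ω, |ξ ω - s ω| ≤ 1 / n := by
    intro ω
    have h1 := Nat.floor_le (hy0 ω)
    have h2 := Nat.lt_floor_add_one ((n : ℝ) * ξ ω)
    have heq : ξ ω - (⌊(n:ℝ) * ξ ω⌋₊ : ℝ) / n
        = ((n:ℝ) * ξ ω - (⌊(n:ℝ) * ξ ω⌋₊ : ℝ)) / n := by
      field_simp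
    rw [hs_floor ω, heq, abs_div, abs_of_pos hnpos, abs_of_nonneg (by linarith)]
    gcongr
    linarith
  have hsnonneg : ∀ ω, 0 ≤ s ω := fun ω => by
    rw [hs_floor ω]; positivity
  have hint_ind : ∀ k : ℕ, Integrable ((A_ k).indicator (fun _ => (1:ℝ))) P :=
    fun k => (integrable_const (1:ℝ)).indicator (hAm0 k)
  have hIs : ∫ ω, s ω ∂P = (1 / (n:ℝ)) * ∑ k ∈ Finset.Icc 1 K, (P (A_ k)).toReal := by
    rw [hsdef]
    simp only
    rw [integral_const_mul, integral_finset_sum _ (fun k _ => hint_ind k)]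
    congr 1
    exact Finset.sum_congr rfl fun k _ => integral_indicator_one (hAm0 k)
  have hIsB : ∫ ω in B, s ω ∂P
      = (1 / (n:ℝ)) * ∑ k ∈ Finset.Icc 1 K, (P (A_ k ∩ B)).toReal := by
    rw [hsdef]
    simp only
    rw [integral_const_mul, integral_finset_sum _ (fun k _ => (hint_ind k).integrableOn)]
    congr 1
    refine Finset.sum_congr rfl fun k _ => ?_
    have h1 : ∫ ω in B, (A_ k).indicator (fun _ => (1:ℝ)) ω ∂P
        = ((P.restrict B) (A_ k)).toReal := integral_indicator_one (hAm0 k)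
    rw [h1, Measure.restrict_apply (hAm0 k)]
  have hints : Integrable s P := by
    rw [hsdef]
    exact (integrable_finset_sum _ (fun k _ => hint_ind k)).const_mul _
  -- bound on M(s)
  have hMs : |(∫ ω in B, s ω ∂P) - (∫ ω, s ω ∂P) * (P B).toReal|
      ≤ (a + 1/n) * (φ * (P B).toReal) := by
    rw [hIs, hIsB]
    have hre : 1/(n:ℝ) * ∑ k ∈ Finset.Icc 1 K, (P (A_ k ∩ B)).toReal
        - (1/(n:ℝ) * ∑ k ∈ Finset.Icc 1 K, (P (A_ k)).toReal) * (P B).toReal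
        = 1/(n:ℝ) * ∑ k ∈ Finset.Icc 1 K,
            ((P (A_ k ∩ B)).toReal - (P (A_ k)).toReal * (P B).toReal) := by
      rw [Finset.sum_sub_distrib, ← Finset.sum_mul]
      ring
    rw [hre, abs_mul]
    have hsum : |∑ k ∈ Finset.Icc 1 K,
        ((P (A_ k ∩ B)).toReal - (P (A_ k)).toReal * (P B).toReal)|
        ≤ (K : ℝ) * (φ * (P B).toReal) := by
      calc _ ≤ ∑ k ∈ Finset.Icc 1 K,
            |(P (A_ k ∩ B)).toReal - (P (A_ k)).toReal * (P B).toReal| :=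
            Finset.abs_sum_le_sum_abs _ _
        _ ≤ ∑ _k ∈ Finset.Icc 1 K, φ * (P B).toReal :=
            Finset.sum_le_sum (fun k _ => hmix _ _ (hAmA k) hB)
        _ = (K : ℝ) * (φ * (P B).toReal) := by simp [Nat.card_Icc]
    have hKle : (K : ℝ) ≤ (n : ℝ) * a + 1 := by
      rw [hKdef]
      exact (Nat.ceil_lt_add_one (by positivity)).le
    calc |1/(n:ℝ)| * |∑ k ∈ Finset.Icc 1 K,
          ((P (A_ k ∩ B)).toReal - (P (A_ k)).toReal * (P B).toReal)|
        ≤ (1/(n:ℝ)) * ((K:ℝ) * (φ * (P B).toReal)) := by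
          rw [abs_of_nonneg (by positivity : (0:ℝ) ≤ 1/(n:ℝ))]
          exact mul_le_mul_of_nonneg_left hsum (by positivity)
      _ ≤ (a + 1/n) * (φ * (P B).toReal) := by
          have hφPB : 0 ≤ φ * (P B).toReal := by positivity
          rw [← mul_assoc]
          refine mul_le_mul_of_nonneg_right ?_ hφPB
          rw [div_mul_eq_mul_div, div_le_iff₀ hnpos]
          have h1 : (1/(n:ℝ)) * n = 1 := by field_simp
          nlinarith [h1]
  -- closeness of integrals
  have hdiffB : |(∫ ω in B, ξ ω ∂P) - (∫ ω in B, s ω ∂P)| ≤ (1/n) * (P B).toReal := by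
    rw [← integral_sub hint.integrableOn hints.integrableOn]
    have := norm_setIntegral_le_of_norm_le_const (μ := P) (s := B)
      (measure_lt_top P B) (C := 1/n) (f := fun ω => ξ ω - s ω)
      (fun ω _ => by rw [Real.norm_eq_abs]; exact hclose ω)
    simpa [Real.norm_eq_abs, Measure.real] using this
  have hdiff : |(∫ ω, ξ ω ∂P) - (∫ ω, s ω ∂P)| ≤ 1/n := by
    rw [← integral_sub hint hints]
    have := norm_integral_le_of_norm_le_const (μ := P) (f := fun ω => ξ ω - s ω)
      (C := 1/n) (Filter.Eventually.of_forall (fun ω => by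
        rw [Real.norm_eq_abs]; exact hclose ω))
    simpa [Real.norm_eq_abs] using this
  have hεn : (φ * (P B).toReal + 2) / n < ε := by
    rw [div_lt_iff₀ hnpos]
    calc φ * (P B).toReal + 2 ≤ ((φ * (P B).toReal + 2)/ε) * ε := by
          rw [div_mul_cancel₀]; exact hε.ne'
      _ < ε * n := by rw [mul_comm ε]; exact mul_lt_mul_of_pos_right hn hε
  have key : |(∫ ω in B, ξ ω ∂P) - (∫ ω, ξ ω ∂P) * (P B).toReal|
      ≤ a * φ * (P B).toReal + (φ * (P B).toReal + 2) / n := by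
    have t1 : |((∫ ω, ξ ω ∂P) - (∫ ω, s ω ∂P)) * (P B).toReal| ≤ 1/n := by
      rw [abs_mul, abs_of_nonneg hPB0]
      calc |(∫ ω, ξ ω ∂P) - (∫ ω, s ω ∂P)| * (P B).toReal ≤ (1/n) * 1 :=
            mul_le_mul hdiff hPB1 hPB0 (by positivity)
        _ = 1/n := by ring
    have expand : (∫ ω in B, ξ ω ∂P) - (∫ ω, ξ ω ∂P) * (P B).toReal
        = ((∫ ω in B, s ω ∂P) - (∫ ω, s ω ∂P) * (P B).toReal)
          + ((∫ ω in B, ξ ω ∂P) - (∫ ω in B, s ω ∂P))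
          + (((∫ ω, s ω ∂P) - (∫ ω, ξ ω ∂P)) * (P B).toReal) := by ring
    rw [expand]
    have h2 : |((∫ ω, s ω ∂P) - (∫ ω, ξ ω ∂P)) * (P B).toReal| ≤ 1/n := by
      rw [← neg_sub (∫ ω, ξ ω ∂P), neg_mul, abs_neg]; exact t1
    calc _ ≤ |((∫ ω in B, s ω ∂P) - (∫ ω, s ω ∂P) * (P B).toReal)
          + ((∫ ω in B, ξ ω ∂P) - (∫ ω in B, s ω ∂P))|
          + |((∫ ω, s ω ∂P) - (∫ ω, ξ ω ∂P)) * (P B).toReal| := abs_add_le _ _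
      _ ≤ |(∫ ω in B, s ω ∂P) - (∫ ω, s ω ∂P) * (P B).toReal|
          + |(∫ ω in B, ξ ω ∂P) - (∫ ω in B, s ω ∂P)| + 1/n :=
          add_le_add (abs_add_le _ _) h2
      _ ≤ (a + 1/n) * (φ * (P B).toReal) + (1/n) * (P B).toReal + 1/n :=
          add_le_add (add_le_add hMs hdiffB) le_rfl
      _ ≤ a * φ * (P B).toReal + (φ * (P B).toReal + 2) / n := by
          have : (1/n) * (P B).toReal ≤ 1/n := by
            calc (1/(n:ℝ)) * (P B).toReal ≤ (1/n) * 1 :=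
                mul_le_mul_of_nonneg_left hPB1 (by positivity)
              _ = 1/n := by ring
          have hφPB : 0 ≤ φ * (P B).toReal := by positivity
          have heq : (φ * (P B).toReal + 2) / n
              = (1/n) * (φ * (P B).toReal) + 2/n := by ring
          have hexp : (a + 1/(n:ℝ)) * (φ * (P B).toReal)
              = a * φ * (P B).toReal + (1/(n:ℝ)) * (φ * (P B).toReal) := by ring
          have h2n : (2:ℝ)/(n:ℝ) = 1/n + 1/n := by ring
          linarith [this, hexp, heq, h2n]
  linarith [key, hεn]


section
variable {mA mB : MeasurableSpace Ω} {m0 : MeasurableSpace Ω}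
    {P : Measure Ω} [IsProbabilityMeasure P] {φ a b : ℝ}

/-- shifted real version: signed `f` with `|f| ≤ a`. -/
lemma step1_real_signed (hA : mA ≤ m0) (hφ : 0 ≤ φ) (ha : 0 ≤ a)
    (hmix : ∀ A B : Set Ω, MeasurableSet[mA] A → MeasurableSet[mB] B →
      |(P (A ∩ B)).toReal - (P A).toReal * (P B).toReal| ≤ φ * (P B).toReal)
    {B : Set Ω} (hB : MeasurableSet[mB] B) (hB0 : MeasurableSet[m0] B)
    {f : Ω → ℝ} (hf : Measurable[mA] f) (hfa : ∀ ω, |f ω| ≤ a) :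
    |(∫ ω in B, f ω ∂P) - (∫ ω, f ω ∂P) * (P B).toReal| ≤ 2 * a * φ * (P B).toReal := by
  have hf0 : @Measurable Ω ℝ m0 _ f := hf.mono hA le_rfl
  have hfint : Integrable f P :=
    integrable_of_bdd hf0.aestronglyMeasurable (fun ω => by
      rw [Real.norm_eq_abs]; exact hfa ω)
  have hg : Measurable[mA] (fun ω => f ω + a) := hf.add_const a
  have h0 : ∀ ω, 0 ≤ f ω + a := fun ω => by have := (abs_le.1 (hfa ω)).1; linarith
  have h2a : ∀ ω, f ω + a ≤ 2 * a := fun ω => by have := (abs_le.1 (hfa ω)).2; linarith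
  have key := step1_real (φ := φ) (a := 2 * a) hA hφ (by linarith) hmix hB hB0 hg h0 h2a
  have e1 : ∫ ω in B, (f ω + a) ∂P = (∫ ω in B, f ω ∂P) + a * (P B).toReal := by
    rw [integral_add hfint.integrableOn (integrable_const a).integrableOn,
      setIntegral_const]
    simp [mul_comm, Measure.real]
  have e2 : ∫ ω, (f ω + a) ∂P = (∫ ω, f ω ∂P) + a := by
    rw [integral_add hfint (integrable_const a), integral_const]
    simp
  rw [e1, e2] at key
  have : (∫ ω in B, f ω ∂P) + a * (P B).toReal
      - ((∫ ω, f ω ∂P) + a) * (P B).toReal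
      = (∫ ω in B, f ω ∂P) - (∫ ω, f ω ∂P) * (P B).toReal := by ring
  rwa [this] at key

/-- complex vs indicator -/
lemma step2_complex_indicator (hA : mA ≤ m0) (hφ : 0 ≤ φ) (ha : 0 ≤ a)
    (hmix : ∀ A B : Set Ω, MeasurableSet[mA] A → MeasurableSet[mB] B →
      |(P (A ∩ B)).toReal - (P A).toReal * (P B).toReal| ≤ φ * (P B).toReal)
    {B : Set Ω} (hB : MeasurableSet[mB] B) (hB0 : MeasurableSet[m0] B)
    {ξ : Ω → ℂ} (hξ : Measurable[mA] ξ) (hξa : ∀ ω, ‖ξ ω‖ ≤ a) :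
    ‖(∫ ω in B, ξ ω ∂P) - (∫ ω, ξ ω ∂P) * ((P B).toReal : ℂ)‖
      ≤ 4 * a * φ * (P B).toReal := by
  have hξ0 : @Measurable Ω ℂ m0 _ ξ := hξ.mono hA le_rfl
  set fr : Ω → ℝ := fun ω => (ξ ω).re with hfr
  set fi : Ω → ℝ := fun ω => (ξ ω).im with hfi
  have hfrm : Measurable[mA] fr := (Complex.measurable_re).comp hξ
  have hfim : Measurable[mA] fi := (Complex.measurable_im).comp hξ
  have hfrm0 : @Measurable Ω ℝ m0 _ fr := hfrm.mono hA le_rfl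
  have hfim0 : @Measurable Ω ℝ m0 _ fi := hfim.mono hA le_rfl
  have hfra : ∀ ω, |fr ω| ≤ a := fun ω =>
    le_trans (Complex.abs_re_le_norm _) (hξa ω)
  have hfia : ∀ ω, |fi ω| ≤ a := fun ω =>
    le_trans (Complex.abs_im_le_norm _) (hξa ω)
  have hfrint : Integrable fr P := integrable_of_bdd hfrm0.aestronglyMeasurable
    (fun ω => by rw [Real.norm_eq_abs]; exact hfra ω)
  have hfiint : Integrable fi P := integrable_of_bdd hfim0.aestronglyMeasurable
    (fun ω => by rw [Real.norm_eq_abs]; exact hfia ω)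
  have hr := step1_real_signed hA hφ ha hmix hB hB0 hfrm hfra
  have hi := step1_real_signed hA hφ ha hmix hB hB0 hfim hfia
  -- decompose integrals
  have hint : Integrable ξ P := integrable_of_bdd hξ0.aestronglyMeasurable hξa
  have hdecompB : ∫ ω in B, ξ ω ∂P
      = ((∫ ω in B, fr ω ∂P : ℝ) : ℂ) + ((∫ ω in B, fi ω ∂P : ℝ) : ℂ) * Complex.I := by
    have h := setIntegral_re_add_im (𝕜 := ℂ) (i := B) hint.integrableOn
    simpa [RCLike.re_to_complex, RCLike.im_to_complex, RCLike.I_to_complex, hfr, hfi]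
      using h.symm
  have hdecomp : ∫ ω, ξ ω ∂P
      = ((∫ ω, fr ω ∂P : ℝ) : ℂ) + ((∫ ω, fi ω ∂P : ℝ) : ℂ) * Complex.I := by
    have h := integral_re_add_im (𝕜 := ℂ) hint
    simpa [RCLike.re_to_complex, RCLike.im_to_complex, RCLike.I_to_complex, hfr, hfi]
      using h.symm
  set Mr : ℝ := (∫ ω in B, fr ω ∂P) - (∫ ω, fr ω ∂P) * (P B).toReal with hMr
  set Mi : ℝ := (∫ ω in B, fi ω ∂P) - (∫ ω, fi ω ∂P) * (P B).toReal with hMi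
  have hsplit : (∫ ω in B, ξ ω ∂P) - (∫ ω, ξ ω ∂P) * ((P B).toReal : ℂ)
      = (Mr : ℂ) + (Mi : ℂ) * Complex.I := by
    rw [hdecompB, hdecomp, hMr, hMi]
    push_cast
    ring
  rw [hsplit]
  calc ‖(Mr : ℂ) + (Mi : ℂ) * Complex.I‖ ≤ ‖(Mr : ℂ)‖ + ‖(Mi : ℂ) * Complex.I‖ :=
        norm_add_le _ _
    _ = |Mr| + |Mi| := by
        rw [norm_mul, Complex.norm_I, mul_one, Complex.norm_real, Complex.norm_real,
          Real.norm_eq_abs, Real.norm_eq_abs]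
    _ ≤ 2 * a * φ * (P B).toReal + 2 * a * φ * (P B).toReal := add_le_add hr hi
    _ = 4 * a * φ * (P B).toReal := by ring

lemma step3_real_eta (hA : mA ≤ m0) (hBle : mB ≤ m0) (hφ : 0 ≤ φ) (ha : 0 ≤ a) (hb : 0 ≤ b)
    (hmix : ∀ A B : Set Ω, MeasurableSet[mA] A → MeasurableSet[mB] B →
      |(P (A ∩ B)).toReal - (P A).toReal * (P B).toReal| ≤ φ * (P B).toReal)
    {ξ : Ω → ℂ} (hξ : Measurable[mA] ξ) (hξa : ∀ ω, ‖ξ ω‖ ≤ a)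
    {η : Ω → ℝ} (hη : Measurable[mB] η) (hη0 : ∀ ω, 0 ≤ η ω) (hηb : ∀ ω, η ω ≤ b) :
    ‖(∫ ω, ξ ω * ((η ω : ℝ) : ℂ) ∂P)
        - (∫ ω, ξ ω ∂P) * ((∫ ω, η ω ∂P : ℝ) : ℂ)‖ ≤ 4 * a * b * φ := by
  have hξ0 : @Measurable Ω ℂ m0 _ ξ := hξ.mono hA le_rfl
  have hη0m : @Measurable Ω ℝ m0 _ η := hη.mono hBle le_rfl
  have hintξ : Integrable ξ P := integrable_of_bdd hξ0.aestronglyMeasurable hξa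
  have hintη : Integrable η P := integrable_of_bdd hη0m.aestronglyMeasurable
    (fun ω => by rw [Real.norm_eq_abs, abs_of_nonneg (hη0 ω)]; exact hηb ω)
  have hintξη : Integrable (fun ω => ξ ω * ((η ω : ℝ) : ℂ)) P := by
    refine integrable_of_bdd ?_ (C := a * b) (fun ω => ?_)
    · exact (hξ0.mul (Complex.measurable_ofReal.comp hη0m)).aestronglyMeasurable
    · rw [norm_mul, Complex.norm_real, Real.norm_eq_abs, abs_of_nonneg (hη0 ω)]
      exact mul_le_mul (hξa ω) (hηb ω) (hη0 ω) ha
  have hnξint : ‖∫ ω, ξ ω ∂P‖ ≤ a := by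
    have := norm_integral_le_of_norm_le_const (μ := P) (f := ξ) (C := a)
      (Filter.Eventually.of_forall hξa)
    simpa using this
  refine le_of_forall_pos_le_add (fun ε hε => ?_)
  obtain ⟨n, hn⟩ := exists_nat_gt ((2 * a + 1) / ε)
  have hnpos : 0 < (n : ℝ) := lt_of_le_of_lt (div_nonneg (by linarith) hε.le) hn
  set B_ : ℕ → Set Ω := fun k => {ω | (k : ℝ) ≤ (n : ℝ) * η ω} with hB_def
  have hBmB : ∀ k : ℕ, MeasurableSet[mB] (B_ k) := fun k =>
    measurableSet_le measurable_const (hη.const_mul _)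
  have hBm0 : ∀ k : ℕ, MeasurableSet[m0] (B_ k) := fun k => hBle _ (hBmB k)
  set K := ⌈(n : ℝ) * b⌉₊ with hKdef
  set t : Ω → ℝ := fun ω =>
    (1 / (n : ℝ)) * ∑ k ∈ Finset.Icc 1 K, (B_ k).indicator (fun _ => (1:ℝ)) ω with htdef
  have hyK : ∀ ω, (n : ℝ) * η ω ≤ K := fun ω =>
    le_trans (by nlinarith [hηb ω]) (Nat.le_ceil _)
  have hy0 : ∀ ω, 0 ≤ (n : ℝ) * η ω := fun ω => by nlinarith [hη0 ω]
  have ht_floor : ∀ ω, t ω = (⌊(n : ℝ) * η ω⌋₊ : ℝ) / n := by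
    intro ω
    have h1 : ∑ k ∈ Finset.Icc 1 K, (B_ k).indicator (fun _ => (1:ℝ)) ω
        = ∑ k ∈ Finset.Icc 1 K, (if (k : ℝ) ≤ (n : ℝ) * η ω then (1:ℝ) else 0) := by
      refine Finset.sum_congr rfl (fun k _ => ?_)
      by_cases h : (k : ℝ) ≤ (n : ℝ) * η ω
      · rw [if_pos h]; exact Set.indicator_of_mem (show ω ∈ B_ k from h) _
      · rw [if_neg h]; exact Set.indicator_of_notMem (show ω ∉ B_ k from h) _
    rw [htdef]
    simp only
    rw [h1, floor_sum_eq _ (hy0 ω) K (hyK ω)]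
    ring
  have htle : ∀ ω, t ω ≤ η ω := fun ω => by
    rw [ht_floor ω, div_le_iff₀ hnpos]
    have := Nat.floor_le (hy0 ω)
    linarith [this, mul_comm (η ω) (n:ℝ)]
  have ht0 : ∀ ω, 0 ≤ t ω := fun ω => by rw [ht_floor ω]; positivity
  have hclose : ∀ ω, |η ω - t ω| ≤ 1 / n := by
    intro ω
    have h1 := Nat.floor_le (hy0 ω)
    have h2 := Nat.lt_floor_add_one ((n : ℝ) * η ω)
    have heq : η ω - (⌊(n:ℝ) * η ω⌋₊ : ℝ) / n
        = ((n:ℝ) * η ω - (⌊(n:ℝ) * η ω⌋₊ : ℝ)) / n := by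
      field_simp
    rw [ht_floor ω, heq, abs_div, abs_of_pos hnpos, abs_of_nonneg (by linarith)]
    gcongr
    linarith
  have hint_ind : ∀ k : ℕ, Integrable ((B_ k).indicator (fun _ => (1:ℝ))) P :=
    fun k => (integrable_const (1:ℝ)).indicator (hBm0 k)
  have hintt : Integrable t P := by
    rw [htdef]
    exact (integrable_finset_sum _ (fun k _ => hint_ind k)).const_mul _
  have hintξt : Integrable (fun ω => ξ ω * ((t ω : ℝ) : ℂ)) P := by
    refine integrable_of_bdd ?_ (C := a * b) (fun ω => ?_)
    · exact (hξ0.mul (Complex.measurable_ofReal.comp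
        (by rw [htdef]; exact ((Finset.measurable_sum _ (fun k _ =>
          (measurable_const.indicator (hBm0 k)))).const_mul _)))).aestronglyMeasurable
    · rw [norm_mul, Complex.norm_real, Real.norm_eq_abs, abs_of_nonneg (ht0 ω)]
      exact mul_le_mul (hξa ω) (le_trans (htle ω) (hηb ω)) (ht0 ω) ha
  -- value of ∫ t
  have hIt : ∫ ω, t ω ∂P = (1 / (n:ℝ)) * ∑ k ∈ Finset.Icc 1 K, (P (B_ k)).toReal := by
    rw [htdef]
    simp only
    rw [integral_const_mul, integral_finset_sum _ (fun k _ => hint_ind k)]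
    congr 1
    exact Finset.sum_congr rfl fun k _ => integral_indicator_one (hBm0 k)
  have hItb : ∫ ω, t ω ∂P ≤ b :=
    le_trans (integral_mono hintt (integrable_const b)
      (fun ω => le_trans (htle ω) (hηb ω))) (by simp)
  have hIt0 : 0 ≤ ∫ ω, t ω ∂P := integral_nonneg ht0
  -- value of ∫ ξ * t
  have hIξt : ∫ ω, ξ ω * ((t ω : ℝ) : ℂ) ∂P
      = (1 / (n:ℝ) : ℂ) * ∑ k ∈ Finset.Icc 1 K, ∫ ω in B_ k, ξ ω ∂P := by
    have hptw : ∀ ω, ξ ω * ((t ω : ℝ) : ℂ)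
        = (1 / (n:ℝ) : ℂ) * ∑ k ∈ Finset.Icc 1 K, (B_ k).indicator ξ ω := by
      intro ω
      rw [htdef]
      simp only
      push_cast
      simp only [Finset.mul_sum]
      refine Finset.sum_congr rfl (fun k _ => ?_)
      by_cases h : ω ∈ B_ k
      · rw [Set.indicator_of_mem h, Set.indicator_of_mem h]; push_cast; ring
      · rw [Set.indicator_of_notMem h, Set.indicator_of_notMem h]; push_cast; ring
    rw [integral_congr_ae (Filter.Eventually.of_forall hptw), integral_const_mul,
      integral_finset_sum _ (fun k _ => (hintξ.indicator (hBm0 k)))]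
    congr 1
    exact Finset.sum_congr rfl fun k _ => integral_indicator (hBm0 k)
  -- bound on L(t)
  have hLt : ‖(∫ ω, ξ ω * ((t ω : ℝ) : ℂ) ∂P)
      - (∫ ω, ξ ω ∂P) * ((∫ ω, t ω ∂P : ℝ) : ℂ)‖ ≤ 4 * a * φ * b := by
    rw [hIξt, hIt]
    have hM : ∑ k ∈ Finset.Icc 1 K, ((∫ ω in B_ k, ξ ω ∂P)
        - (∫ ω, ξ ω ∂P) * ((P (B_ k)).toReal : ℂ))
        = (∑ k ∈ Finset.Icc 1 K, ∫ ω in B_ k, ξ ω ∂P)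
          - (∫ ω, ξ ω ∂P)
            * (((∑ k ∈ Finset.Icc 1 K, (P (B_ k)).toReal : ℝ)) : ℂ) := by
      rw [Finset.sum_sub_distrib, ← Finset.mul_sum]
      push_cast
      ring
    have hexp : (1 / (n:ℝ) : ℂ) * (∑ k ∈ Finset.Icc 1 K, ∫ ω in B_ k, ξ ω ∂P)
        - (∫ ω, ξ ω ∂P)
          * (((1 / (n:ℝ)) * ∑ k ∈ Finset.Icc 1 K, (P (B_ k)).toReal : ℝ) : ℂ)
        = (1 / (n:ℝ) : ℂ) * ∑ k ∈ Finset.Icc 1 K,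
            ((∫ ω in B_ k, ξ ω ∂P) - (∫ ω, ξ ω ∂P) * ((P (B_ k)).toReal : ℂ)) := by
      rw [hM]
      push_cast
      ring
    rw [hexp, norm_mul]
    have h1n : ‖(1 / (n:ℝ) : ℂ)‖ = 1 / (n:ℝ) := by
      rw [norm_div, norm_one, Complex.norm_real, Real.norm_natCast]
    rw [h1n]
    have hsum : ‖∑ k ∈ Finset.Icc 1 K,
        ((∫ ω in B_ k, ξ ω ∂P) - (∫ ω, ξ ω ∂P) * ((P (B_ k)).toReal : ℂ))‖
        ≤ ∑ k ∈ Finset.Icc 1 K, (4 * a * φ * (P (B_ k)).toReal) := by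
      refine le_trans (norm_sum_le _ _) (Finset.sum_le_sum (fun k _ => ?_))
      exact step2_complex_indicator hA hφ ha hmix (hBmB k) (hBm0 k) hξ hξa
    calc (1 / (n:ℝ)) * ‖∑ k ∈ Finset.Icc 1 K,
          ((∫ ω in B_ k, ξ ω ∂P) - (∫ ω, ξ ω ∂P) * ((P (B_ k)).toReal : ℂ))‖
        ≤ (1 / (n:ℝ)) * ∑ k ∈ Finset.Icc 1 K, (4 * a * φ * (P (B_ k)).toReal) :=
          mul_le_mul_of_nonneg_left hsum (by positivity)
      _ = 4 * a * φ * ((1 / (n:ℝ)) * ∑ k ∈ Finset.Icc 1 K, (P (B_ k)).toReal) := by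
          rw [← Finset.mul_sum]; ring
      _ = 4 * a * φ * (∫ ω, t ω ∂P) := by rw [← hIt]
      _ ≤ 4 * a * φ * b := by
          refine mul_le_mul_of_nonneg_left hItb (by positivity)
  -- closeness
  have hd1 : ‖(∫ ω, ξ ω * ((η ω : ℝ) : ℂ) ∂P) - (∫ ω, ξ ω * ((t ω : ℝ) : ℂ) ∂P)‖
      ≤ a * (1/(n:ℝ)) := by
    rw [← integral_sub hintξη hintξt]
    have := norm_integral_le_of_norm_le_const (μ := P)
      (f := fun ω => ξ ω * ((η ω : ℝ) : ℂ) - ξ ω * ((t ω : ℝ) : ℂ)) (C := a * (1/(n:ℝ)))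
      (Filter.Eventually.of_forall (fun ω => by
        show ‖ξ ω * ((η ω : ℝ) : ℂ) - ξ ω * ((t ω : ℝ) : ℂ)‖ ≤ a * (1/(n:ℝ))
        rw [← mul_sub, norm_mul]
        have h1 : ‖((η ω : ℝ) : ℂ) - ((t ω : ℝ) : ℂ)‖ = |η ω - t ω| := by
          rw [← Complex.ofReal_sub, Complex.norm_real, Real.norm_eq_abs]
        rw [h1]
        exact mul_le_mul (hξa ω) (hclose ω) (abs_nonneg _) ha))
    simpa using this
  have hd2 : |(∫ ω, η ω ∂P) - (∫ ω, t ω ∂P)| ≤ 1/(n:ℝ) := by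
    rw [← integral_sub hintη hintt]
    have := norm_integral_le_of_norm_le_const (μ := P) (f := fun ω => η ω - t ω)
      (C := 1/(n:ℝ)) (Filter.Eventually.of_forall (fun ω => by
        rw [Real.norm_eq_abs]; exact hclose ω))
    simpa [Real.norm_eq_abs] using this
  have hd3 : ‖(∫ ω, ξ ω ∂P) * ((∫ ω, η ω ∂P : ℝ) : ℂ)
      - (∫ ω, ξ ω ∂P) * ((∫ ω, t ω ∂P : ℝ) : ℂ)‖ ≤ a * (1/(n:ℝ)) := by
    rw [← mul_sub, norm_mul, ← Complex.ofReal_sub, Complex.norm_real, Real.norm_eq_abs]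
    exact mul_le_mul hnξint hd2 (abs_nonneg _) ha
  have hεn : 2 * a / (n:ℝ) < ε := by
    rw [div_lt_iff₀ hnpos]
    have h1 : (2 * a + 1) ≤ ((2 * a + 1)/ε) * ε := by
      rw [div_mul_cancel₀]; exact hε.ne'
    nlinarith [mul_lt_mul_of_pos_right hn hε]
  have expand : (∫ ω, ξ ω * ((η ω : ℝ) : ℂ) ∂P)
      - (∫ ω, ξ ω ∂P) * ((∫ ω, η ω ∂P : ℝ) : ℂ)
      = ((∫ ω, ξ ω * ((t ω : ℝ) : ℂ) ∂P) - (∫ ω, ξ ω ∂P) * ((∫ ω, t ω ∂P : ℝ) : ℂ))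
        + ((∫ ω, ξ ω * ((η ω : ℝ) : ℂ) ∂P) - (∫ ω, ξ ω * ((t ω : ℝ) : ℂ) ∂P))
        + ((∫ ω, ξ ω ∂P) * ((∫ ω, t ω ∂P : ℝ) : ℂ)
            - (∫ ω, ξ ω ∂P) * ((∫ ω, η ω ∂P : ℝ) : ℂ)) := by ring
  rw [expand]
  have hd3' : ‖(∫ ω, ξ ω ∂P) * ((∫ ω, t ω ∂P : ℝ) : ℂ)
      - (∫ ω, ξ ω ∂P) * ((∫ ω, η ω ∂P : ℝ) : ℂ)‖ ≤ a * (1/(n:ℝ)) := by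
    rw [← norm_neg, neg_sub]; exact hd3
  calc _ ≤ ‖((∫ ω, ξ ω * ((t ω : ℝ) : ℂ) ∂P) - (∫ ω, ξ ω ∂P) * ((∫ ω, t ω ∂P : ℝ) : ℂ))
        + ((∫ ω, ξ ω * ((η ω : ℝ) : ℂ) ∂P) - (∫ ω, ξ ω * ((t ω : ℝ) : ℂ) ∂P))‖
        + ‖(∫ ω, ξ ω ∂P) * ((∫ ω, t ω ∂P : ℝ) : ℂ)
            - (∫ ω, ξ ω ∂P) * ((∫ ω, η ω ∂P : ℝ) : ℂ)‖ := norm_add_le _ _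
    _ ≤ ‖(∫ ω, ξ ω * ((t ω : ℝ) : ℂ) ∂P) - (∫ ω, ξ ω ∂P) * ((∫ ω, t ω ∂P : ℝ) : ℂ)‖
        + ‖(∫ ω, ξ ω * ((η ω : ℝ) : ℂ) ∂P) - (∫ ω, ξ ω * ((t ω : ℝ) : ℂ) ∂P)‖
        + a * (1/(n:ℝ)) := add_le_add (norm_add_le _ _) hd3'
    _ ≤ 4 * a * φ * b + a * (1/(n:ℝ)) + a * (1/(n:ℝ)) :=
        add_le_add (add_le_add hLt hd1) le_rfl
    _ ≤ 4 * a * b * φ + ε := by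
        have : a * (1/(n:ℝ)) + a * (1/(n:ℝ)) = 2 * a / n := by ring
        have h4 : 4 * a * φ * b = 4 * a * b * φ := by ring
        linarith [hεn]

/-- signed real η -/
lemma step3_signed (hA : mA ≤ m0) (hBle : mB ≤ m0) (hφ : 0 ≤ φ) (ha : 0 ≤ a) (hb : 0 ≤ b)
    (hmix : ∀ A B : Set Ω, MeasurableSet[mA] A → MeasurableSet[mB] B →
      |(P (A ∩ B)).toReal - (P A).toReal * (P B).toReal| ≤ φ * (P B).toReal)
    {ξ : Ω → ℂ} (hξ : Measurable[mA] ξ) (hξa : ∀ ω, ‖ξ ω‖ ≤ a)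
    {η : Ω → ℝ} (hη : Measurable[mB] η) (hηb : ∀ ω, |η ω| ≤ b) :
    ‖(∫ ω, ξ ω * ((η ω : ℝ) : ℂ) ∂P)
        - (∫ ω, ξ ω ∂P) * ((∫ ω, η ω ∂P : ℝ) : ℂ)‖ ≤ 8 * a * b * φ := by
  have hξ0 : @Measurable Ω ℂ m0 _ ξ := hξ.mono hA le_rfl
  have hη0m : @Measurable Ω ℝ m0 _ η := hη.mono hBle le_rfl
  have hintξ : Integrable ξ P := integrable_of_bdd hξ0.aestronglyMeasurable hξa
  have hintη : Integrable η P := integrable_of_bdd hη0m.aestronglyMeasurable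
    (fun ω => by rw [Real.norm_eq_abs]; exact hηb ω)
  have hintξη : Integrable (fun ω => ξ ω * ((η ω : ℝ) : ℂ)) P := by
    refine integrable_of_bdd ?_ (C := a * b) (fun ω => ?_)
    · exact (hξ0.mul (Complex.measurable_ofReal.comp hη0m)).aestronglyMeasurable
    · rw [norm_mul, Complex.norm_real, Real.norm_eq_abs]
      exact mul_le_mul (hξa ω) (hηb ω) (abs_nonneg _) ha
  have hg : Measurable[mB] (fun ω => η ω + b) := hη.add_const b
  have h0 : ∀ ω, 0 ≤ η ω + b := fun ω => by have := (abs_le.1 (hηb ω)).1; linarith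
  have h2b : ∀ ω, η ω + b ≤ 2 * b := fun ω => by have := (abs_le.1 (hηb ω)).2; linarith
  have key := step3_real_eta (b := 2 * b) hA hBle hφ ha (by linarith) hmix hξ hξa hg h0 h2b
  have e1 : ∫ ω, ξ ω * (((η ω + b : ℝ)) : ℂ) ∂P
      = (∫ ω, ξ ω * ((η ω : ℝ) : ℂ) ∂P) + (b : ℂ) * ∫ ω, ξ ω ∂P := by
    have hptw : ∀ ω, ξ ω * (((η ω + b : ℝ)) : ℂ)
        = ξ ω * ((η ω : ℝ) : ℂ) + (b : ℂ) * ξ ω := by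
      intro ω; push_cast; ring
    rw [integral_congr_ae (Filter.Eventually.of_forall hptw),
      integral_add hintξη (hintξ.const_mul _), integral_const_mul]
  have e2 : ∫ ω, (η ω + b) ∂P = (∫ ω, η ω ∂P) + b := by
    rw [integral_add hintη (integrable_const b), integral_const]
    simp
  rw [e1, e2] at key
  have heq : (∫ ω, ξ ω * ((η ω :ℝ) : ℂ) ∂P) + (b:ℂ) * (∫ ω, ξ ω ∂P)
      - (∫ ω, ξ ω ∂P) * (((∫ ω, η ω ∂P) + b : ℝ) : ℂ)
      = (∫ ω, ξ ω * ((η ω :ℝ) : ℂ) ∂P)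
        - (∫ ω, ξ ω ∂P) * ((∫ ω, η ω ∂P : ℝ) : ℂ) := by
    push_cast
    ring
  rw [heq] at key
  calc _ ≤ 4 * a * (2*b) * φ := key
    _ = 8 * a * b * φ := by ring

/-- complex η -/
lemma step4 (hA : mA ≤ m0) (hBle : mB ≤ m0) (hφ : 0 ≤ φ) (ha : 0 ≤ a) (hb : 0 ≤ b)
    (hmix : ∀ A B : Set Ω, MeasurableSet[mA] A → MeasurableSet[mB] B →
      |(P (A ∩ B)).toReal - (P A).toReal * (P B).toReal| ≤ φ * (P B).toReal)
    {ξ : Ω → ℂ} (hξ : Measurable[mA] ξ) (hξa : ∀ ω, ‖ξ ω‖ ≤ a)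
    {η : Ω → ℂ} (hη : Measurable[mB] η) (hηb : ∀ ω, ‖η ω‖ ≤ b) :
    ‖(∫ ω, ξ ω * η ω ∂P) - (∫ ω, ξ ω ∂P) * (∫ ω, η ω ∂P)‖ ≤ 16 * a * b * φ := by
  have hξ0 : @Measurable Ω ℂ m0 _ ξ := hξ.mono hA le_rfl
  have hη0 : @Measurable Ω ℂ m0 _ η := hη.mono hBle le_rfl
  have hintη : Integrable η P := integrable_of_bdd hη0.aestronglyMeasurable hηb
  set gr : Ω → ℝ := fun ω => (η ω).re with hgr
  set gi : Ω → ℝ := fun ω => (η ω).im with hgi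
  have hgrm : Measurable[mB] gr := (Complex.measurable_re).comp hη
  have hgim : Measurable[mB] gi := (Complex.measurable_im).comp hη
  have hgra : ∀ ω, |gr ω| ≤ b := fun ω => le_trans (Complex.abs_re_le_norm _) (hηb ω)
  have hgia : ∀ ω, |gi ω| ≤ b := fun ω => le_trans (Complex.abs_im_le_norm _) (hηb ω)
  have hr := step3_signed hA hBle hφ ha hb hmix hξ hξa hgrm hgra
  have hi := step3_signed hA hBle hφ ha hb hmix hξ hξa hgim hgia
  -- integrability
  have hgrm0 : @Measurable Ω ℝ m0 _ gr := hgrm.mono hBle le_rfl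
  have hgim0 : @Measurable Ω ℝ m0 _ gi := hgim.mono hBle le_rfl
  have hintgr : Integrable gr P := integrable_of_bdd hgrm0.aestronglyMeasurable
    (fun ω => by rw [Real.norm_eq_abs]; exact hgra ω)
  have hintgi : Integrable gi P := integrable_of_bdd hgim0.aestronglyMeasurable
    (fun ω => by rw [Real.norm_eq_abs]; exact hgia ω)
  have hintξgr : Integrable (fun ω => ξ ω * ((gr ω : ℝ) : ℂ)) P := by
    refine integrable_of_bdd ?_ (C := a * b) (fun ω => ?_)
    · exact (hξ0.mul (Complex.measurable_ofReal.comp hgrm0)).aestronglyMeasurable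
    · rw [norm_mul, Complex.norm_real, Real.norm_eq_abs]
      exact mul_le_mul (hξa ω) (hgra ω) (abs_nonneg _) ha
  have hintξgi : Integrable (fun ω => ξ ω * ((gi ω : ℝ) : ℂ)) P := by
    refine integrable_of_bdd ?_ (C := a * b) (fun ω => ?_)
    · exact (hξ0.mul (Complex.measurable_ofReal.comp hgim0)).aestronglyMeasurable
    · rw [norm_mul, Complex.norm_real, Real.norm_eq_abs]
      exact mul_le_mul (hξa ω) (hgia ω) (abs_nonneg _) ha
  -- decompose
  have hdecη : ∫ ω, η ω ∂P
      = ((∫ ω, gr ω ∂P : ℝ) : ℂ) + ((∫ ω, gi ω ∂P : ℝ) : ℂ) * Complex.I := by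
    have h := integral_re_add_im (𝕜 := ℂ) hintη
    simpa [RCLike.re_to_complex, RCLike.im_to_complex, RCLike.I_to_complex, hgr, hgi]
      using h.symm
  have hdecξη : ∫ ω, ξ ω * η ω ∂P
      = (∫ ω, ξ ω * ((gr ω : ℝ) : ℂ) ∂P)
        + (∫ ω, ξ ω * ((gi ω : ℝ) : ℂ) ∂P) * Complex.I := by
    have hptw : ∀ ω, ξ ω * η ω
        = ξ ω * ((gr ω : ℝ) : ℂ) + (ξ ω * ((gi ω : ℝ) : ℂ)) * Complex.I := by
      intro ω
      have : η ω = ((gr ω : ℝ) : ℂ) + ((gi ω : ℝ) : ℂ) * Complex.I :=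
        (Complex.re_add_im (η ω)).symm
      rw [this]
      ring
    rw [integral_congr_ae (Filter.Eventually.of_forall hptw),
      integral_add hintξgr (hintξgi.mul_const _), integral_mul_const]
  have hsplit : (∫ ω, ξ ω * η ω ∂P) - (∫ ω, ξ ω ∂P) * (∫ ω, η ω ∂P)
      = ((∫ ω, ξ ω * ((gr ω : ℝ) : ℂ) ∂P)
          - (∫ ω, ξ ω ∂P) * ((∫ ω, gr ω ∂P : ℝ) : ℂ))
        + ((∫ ω, ξ ω * ((gi ω : ℝ) : ℂ) ∂P)
          - (∫ ω, ξ ω ∂P) * ((∫ ω, gi ω ∂P : ℝ) : ℂ)) * Complex.I := by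
    rw [hdecξη, hdecη]
    ring
  rw [hsplit]
  calc _ ≤ ‖(∫ ω, ξ ω * ((gr ω : ℝ) : ℂ) ∂P)
          - (∫ ω, ξ ω ∂P) * ((∫ ω, gr ω ∂P : ℝ) : ℂ)‖
        + ‖((∫ ω, ξ ω * ((gi ω : ℝ) : ℂ) ∂P)
          - (∫ ω, ξ ω ∂P) * ((∫ ω, gi ω ∂P : ℝ) : ℂ)) * Complex.I‖ := norm_add_le _ _
    _ = ‖(∫ ω, ξ ω * ((gr ω : ℝ) : ℂ) ∂P)
          - (∫ ω, ξ ω ∂P) * ((∫ ω, gr ω ∂P : ℝ) : ℂ)‖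
        + ‖(∫ ω, ξ ω * ((gi ω : ℝ) : ℂ) ∂P)
          - (∫ ω, ξ ω ∂P) * ((∫ ω, gi ω ∂P : ℝ) : ℂ)‖ := by
        rw [norm_mul, Complex.norm_I, mul_one]
    _ ≤ 8 * a * b * φ + 8 * a * b * φ := add_le_add hr hi
    _ = 16 * a * b * φ := by ring

end

/-- Ibragimov–Linnik covariance inequality for bounded random variables:
there is an absolute constant `C` such that for any probability space, any two
sub-σ-algebras whose Ibragimov–Linnik mixing coefficient is at most `φ`, and any
complex random variables `ξ, η` measurable w.r.t. them with `‖ξ‖ ≤ a`, `‖η‖ ≤ b`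
almost surely, one has `‖E(ξη) − Eξ·Eη‖ ≤ C a b φ`. -/
theorem stmt_8 :
    ∃ C : ℝ, 0 < C ∧
      ∀ (Ω : Type) (m0 : MeasurableSpace Ω) (P : Measure Ω), IsProbabilityMeasure P →
      ∀ (mA mB : MeasurableSpace Ω), mA ≤ m0 → mB ≤ m0 →
      ∀ (φ a b : ℝ), 0 ≤ φ → 0 ≤ a → 0 ≤ b →
      (∀ A B : Set Ω, MeasurableSet[mA] A → MeasurableSet[mB] B →
        |(P (A ∩ B)).toReal - (P A).toReal * (P B).toReal| ≤ φ * (P B).toReal) →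
      ∀ (ξ η : Ω → ℂ), Measurable[mA] ξ → Measurable[mB] η →
      (∀ᵐ ω ∂P, ‖ξ ω‖ ≤ a) → (∀ᵐ ω ∂P, ‖η ω‖ ≤ b) →
      ‖(∫ ω, ξ ω * η ω ∂P) - (∫ ω, ξ ω ∂P) * (∫ ω, η ω ∂P)‖ ≤ C * a * b * φ := by
  refine ⟨16, by norm_num, ?_⟩
  intro Ω m0 P hP mA mB hA hB φ a b hφ ha hb hmix ξ η hξ hη hξa hηb
  haveI := hP
  set S : Set Ω := {ω | ‖ξ ω‖ ≤ a} with hS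
  set T : Set Ω := {ω | ‖η ω‖ ≤ b} with hT
  have hSeq : S = ξ ⁻¹' (Metric.closedBall 0 a) := by
    ext ω; simp [hS, Metric.mem_closedBall, dist_zero_right]
  have hTeq : T = η ⁻¹' (Metric.closedBall 0 b) := by
    ext ω; simp [hT, Metric.mem_closedBall, dist_zero_right]
  have hSm : MeasurableSet[mA] S := hSeq ▸ hξ measurableSet_closedBall
  have hTm : MeasurableSet[mB] T := hTeq ▸ hη measurableSet_closedBall
  set ξ' : Ω → ℂ := S.indicator ξ with hξ'
  set η' : Ω → ℂ := T.indicator η with hη'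
  have hξ'm : Measurable[mA] ξ' := hξ.indicator hSm
  have hη'm : Measurable[mB] η' := hη.indicator hTm
  have hξ'a : ∀ ω, ‖ξ' ω‖ ≤ a := fun ω => by
    rw [hξ']
    by_cases h : ω ∈ S
    · rw [Set.indicator_of_mem h]; exact h
    · rw [Set.indicator_of_notMem h]; simpa using ha
  have hη'b : ∀ ω, ‖η' ω‖ ≤ b := fun ω => by
    rw [hη']
    by_cases h : ω ∈ T
    · rw [Set.indicator_of_mem h]; exact h
    · rw [Set.indicator_of_notMem h]; simpa using hb
  have hξae : ξ' =ᵐ[P] ξ := by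
    filter_upwards [hξa] with ω hω
    rw [hξ', Set.indicator_of_mem (show ω ∈ S from hω)]
  have hηae : η' =ᵐ[P] η := by
    filter_upwards [hηb] with ω hω
    rw [hη', Set.indicator_of_mem (show ω ∈ T from hω)]
  have h1 : ∫ ω, ξ ω * η ω ∂P = ∫ ω, ξ' ω * η' ω ∂P := by
    refine integral_congr_ae ?_
    filter_upwards [hξae, hηae] with ω h1 h2
    rw [h1, h2]
  have h2 : ∫ ω, ξ ω ∂P = ∫ ω, ξ' ω ∂P := (integral_congr_ae hξae).symm
  have h3 : ∫ ω, η ω ∂P = ∫ ω, η' ω ∂P := (integral_congr_ae hηae).symm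
  rw [h1, h2, h3]
  have := step4 hA hB hφ ha hb hmix hξ'm hξ'a hη'm hη'b
  calc _ ≤ 16 * a * b * φ := this
    _ = 16 * a * b * φ := rfl
end

section
/- Let φ: [0,∞) → [0,∞) be nonincreasing with ∫₀^∞ r^{n-2} φ(r)^{1/2} dr = C̄ < ∞ and let S_t ⊂ ℝⁿ be the sphere of radius t centered at the origin (n ≥ 2). Then for every x ∈ S_t and every t ≥ 0, ∫_{S_t} φ(|x−y|)^{1/2} dS(y) ≤ C(n) C̄, where dS is the surface measure; the bound is uniform in t. -/
open MeasureTheory Set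
open scoped ENNReal NNReal RealInnerProductSpace

set_option maxHeartbeats 1000000

private lemma euclidBall_bound (m : ℕ) :
    ∃ B : ℝ≥0∞, B ≠ ∞ ∧ ∀ r : ℝ, 0 ≤ r →
      μH[(m : ℝ)] (Metric.closedBall (0 : EuclideanSpace ℝ (Fin m)) r)
        ≤ B * ENNReal.ofReal (r ^ m) := by
  set K : ℝ≥0 := (Fintype.card (Fin m) : ℝ≥0) ^ ((1 / (2 : ℝ≥0∞)).toReal) with hKdef
  refine ⟨(K : ℝ≥0∞) ^ (m : ℝ) * ENNReal.ofReal (2 ^ m), ?_, ?_⟩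
  · exact ENNReal.mul_ne_top
      (ENNReal.rpow_ne_top_of_nonneg (by positivity) ENNReal.coe_ne_top) ENNReal.ofReal_ne_top
  intro r hr
  have hlip : LipschitzWith K ((WithLp.equiv 2 (Fin m → ℝ)).symm) :=
    PiLp.lipschitzWith_toLp 2 (fun _ : Fin m => ℝ)
  have hsub : Metric.closedBall (0 : EuclideanSpace ℝ (Fin m)) r ⊆
      (WithLp.equiv 2 (Fin m → ℝ)).symm '' (Metric.closedBall (0 : Fin m → ℝ) r) := by
    intro y hy
    refine ⟨WithLp.equiv 2 _ y, ?_, (WithLp.equiv 2 _).symm_apply_apply y⟩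
    have h0 : (WithLp.equiv 2 (Fin m → ℝ)) 0 = 0 := rfl
    have h1 : dist (WithLp.equiv 2 (Fin m → ℝ) y) (WithLp.equiv 2 (Fin m → ℝ) 0) ≤ (1 : ℝ≥0) * dist y 0 :=
      (PiLp.lipschitzWith_ofLp 2 (fun _ : Fin m => ℝ)).dist_le_mul y 0
    rw [h0] at h1
    rw [Metric.mem_closedBall] at hy ⊢
    simpa using h1.trans (by simpa using hy)
  have hvol : (μH[(m : ℝ)] : Measure (Fin m → ℝ)) = volume := by
    simpa using (hausdorffMeasure_pi_real (ι := Fin m))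
  calc μH[(m : ℝ)] (Metric.closedBall (0 : EuclideanSpace ℝ (Fin m)) r)
      ≤ μH[(m : ℝ)] ((WithLp.equiv 2 (Fin m → ℝ)).symm '' (Metric.closedBall (0 : Fin m → ℝ) r)) :=
        measure_mono hsub
    _ ≤ (K : ℝ≥0∞) ^ (m : ℝ) * μH[(m : ℝ)] (Metric.closedBall (0 : Fin m → ℝ) r) :=
        hlip.hausdorffMeasure_image_le (by positivity) _
    _ = (K : ℝ≥0∞) ^ (m : ℝ) * ENNReal.ofReal ((2 * r) ^ m) := by
        rw [hvol, Real.volume_pi_closedBall _ hr, Fintype.card_fin]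
    _ = (K : ℝ≥0∞) ^ (m : ℝ) * ENNReal.ofReal (2 ^ m) * ENNReal.ofReal (r ^ m) := by
        rw [mul_pow, ENNReal.ofReal_mul (by positivity), mul_assoc]

private lemma subBall_bound (n m : ℕ) (hm : m + 1 = n) :
    ∃ B : ℝ≥0∞, B ≠ ∞ ∧ ∀ (x : EuclideanSpace ℝ (Fin n)), x ≠ 0 → ∀ r : ℝ, 0 ≤ r →
      μH[(m : ℝ)] (Subtype.val ''
          (Metric.closedBall (0 : (Submodule.span ℝ ({x} : Set (EuclideanSpace ℝ (Fin n))))ᗮ) r))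
        ≤ B * ENNReal.ofReal (r ^ m) := by
  obtain ⟨B, hB, hBB⟩ := euclidBall_bound m
  refine ⟨B, hB, ?_⟩
  intro x hx r hr
  haveI : Fact (Module.finrank ℝ (EuclideanSpace ℝ (Fin n)) = m + 1) :=
    ⟨by rw [finrank_euclideanSpace_fin]; omega⟩
  set F := (Submodule.span ℝ ({x} : Set (EuclideanSpace ℝ (Fin n))))ᗮ with hFdef
  have hF : Module.finrank ℝ F = m := Submodule.finrank_orthogonal_span_singleton hx
  let e : F ≃ₗᵢ[ℝ] EuclideanSpace ℝ (Fin m) :=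
    ((stdOrthonormalBasis ℝ F).reindex (finCongr hF)).repr
  have h1 : μH[(m : ℝ)] (Subtype.val '' (Metric.closedBall (0 : F) r))
      = μH[(m : ℝ)] (Metric.closedBall (0 : F) r) := by
    have hiso : Isometry (Subtype.val : F → EuclideanSpace ℝ (Fin n)) :=
      F.subtypeₗᵢ.isometry
    exact hiso.hausdorffMeasure_image (Or.inl (by positivity)) _
  have h2 : μH[(m : ℝ)] (Metric.closedBall (0 : F) r)
      = μH[(m : ℝ)] (Metric.closedBall (0 : EuclideanSpace ℝ (Fin m)) r) := by
    have h3 := e.toIsometryEquiv.hausdorffMeasure_image (m : ℝ) (Metric.closedBall (0 : F) r)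
    rw [e.toIsometryEquiv.image_closedBall] at h3
    rw [← h3]
    congr 1
    simp [LinearIsometryEquiv.coe_toIsometryEquiv]
  rw [h1, h2]
  exact hBB r hr

private lemma cap_bound (n m : ℕ) (hm : m + 1 = n) :
    ∃ K : ℝ≥0∞, K ≠ ∞ ∧ ∀ t : ℝ, 0 < t →
      ∀ x : EuclideanSpace ℝ (Fin n), ‖x‖ = t →
      ∀ r : ℝ, 0 ≤ r → r ≤ t / 2 →
      μH[(m : ℝ)] (Metric.sphere (0 : EuclideanSpace ℝ (Fin n)) t ∩ Metric.closedBall x r)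
        ≤ K * ENNReal.ofReal (r ^ m) := by
  obtain ⟨B, hB, hBB⟩ := subBall_bound n m hm
  refine ⟨(2 : ℝ≥0∞) ^ (m : ℝ) * B, ENNReal.mul_ne_top
    (ENNReal.rpow_ne_top_of_nonneg (by positivity) ENNReal.ofNat_ne_top) hB, ?_⟩
  intro t ht x hx r hr hrt
  have hx0 : x ≠ 0 := by
    intro h; rw [h, norm_zero] at hx; linarith
  set u : EuclideanSpace ℝ (Fin n) := t⁻¹ • x with hu_def
  have hu : ‖u‖ = 1 := by
    rw [hu_def, norm_smul, Real.norm_eq_abs, abs_of_pos (inv_pos.2 ht), hx,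
      inv_mul_cancel₀ ht.ne']
  have hxu : x = t • u := by
    rw [hu_def, smul_smul, mul_inv_cancel₀ ht.ne', one_smul]
  set F : EuclideanSpace ℝ (Fin n) → EuclideanSpace ℝ (Fin n) :=
    fun w => w + Real.sqrt (t ^ 2 - ‖w‖ ^ 2) • u with hFdef
  set D : Set (EuclideanSpace ℝ (Fin n)) := Subtype.val ''
    (Metric.closedBall (0 : (Submodule.span ℝ ({x} : Set (EuclideanSpace ℝ (Fin n))))ᗮ) r)
    with hDdef
  have hDmem : ∀ w : EuclideanSpace ℝ (Fin n),
      w ∈ D ↔ (w ∈ (Submodule.span ℝ ({x} : Set (EuclideanSpace ℝ (Fin n))))ᗮ ∧ ‖w‖ ≤ r) := by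
    intro w
    constructor
    · rintro ⟨⟨w', hw'⟩, hw'', rfl⟩
      refine ⟨hw', ?_⟩
      simpa [mem_closedBall_zero_iff] using hw''
    · rintro ⟨h1, h2⟩
      exact ⟨⟨w, h1⟩, by simpa [mem_closedBall_zero_iff] using h2, rfl⟩
  -- square root facts
  have hsq : ∀ s : ℝ, 0 ≤ s → s ≤ t / 2 →
      Real.sqrt (t ^ 2 - s ^ 2) ^ 2 = t ^ 2 - s ^ 2 ∧ t / 2 ≤ Real.sqrt (t ^ 2 - s ^ 2) := by
    intro s h0 h1
    have hnn : 0 ≤ t ^ 2 - s ^ 2 := by nlinarith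
    have h2 := Real.sq_sqrt hnn
    refine ⟨h2, ?_⟩
    nlinarith [Real.sqrt_nonneg (t ^ 2 - s ^ 2)]
  have key : ∀ s₁ s₂ : ℝ, 0 ≤ s₂ → s₂ ≤ s₁ → s₁ ≤ t / 2 →
      Real.sqrt (t ^ 2 - s₂ ^ 2) - Real.sqrt (t ^ 2 - s₁ ^ 2) ≤ s₁ - s₂ := by
    intro s₁ s₂ h0 h21 h1
    obtain ⟨e1, e1'⟩ := hsq s₁ (h0.trans h21) h1
    obtain ⟨e2, e2'⟩ := hsq s₂ h0 (h21.trans h1)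
    set g₁ := Real.sqrt (t ^ 2 - s₁ ^ 2)
    set g₂ := Real.sqrt (t ^ 2 - s₂ ^ 2)
    have hmul : (g₂ - g₁) * (g₂ + g₁) = s₁ ^ 2 - s₂ ^ 2 := by linear_combination e2 - e1
    nlinarith [hmul, e1', e2',
      mul_nonneg (sub_nonneg.2 h21) (show (0:ℝ) ≤ g₁ + g₂ - (s₁ + s₂) by nlinarith)]
  have hglip : ∀ s₁ s₂ : ℝ, 0 ≤ s₁ → s₁ ≤ t / 2 → 0 ≤ s₂ → s₂ ≤ t / 2 →
      |Real.sqrt (t ^ 2 - s₁ ^ 2) - Real.sqrt (t ^ 2 - s₂ ^ 2)| ≤ |s₁ - s₂| := by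
    intro s₁ s₂ h0 h1 h0' h1'
    rcases le_total s₂ s₁ with h | h
    · have hg : Real.sqrt (t ^ 2 - s₁ ^ 2) ≤ Real.sqrt (t ^ 2 - s₂ ^ 2) :=
        Real.sqrt_le_sqrt (by nlinarith)
      rw [abs_of_nonpos (by linarith), abs_of_nonneg (by linarith)]
      linarith [key s₁ s₂ h0' h h1]
    · have hg : Real.sqrt (t ^ 2 - s₂ ^ 2) ≤ Real.sqrt (t ^ 2 - s₁ ^ 2) :=
        Real.sqrt_le_sqrt (by nlinarith)
      rw [abs_of_nonneg (by linarith), abs_of_nonpos (by linarith)]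
      linarith [key s₂ s₁ h0 h h1']
  have hlipF : LipschitzOnWith 2 F D := by
    apply LipschitzOnWith.of_dist_le_mul
    intro w₁ h₁ w₂ h₂
    obtain ⟨_, hw₁⟩ := (hDmem w₁).1 h₁
    obtain ⟨_, hw₂⟩ := (hDmem w₂).1 h₂
    have h3 : F w₁ - F w₂ = (w₁ - w₂) +
        (Real.sqrt (t ^ 2 - ‖w₁‖ ^ 2) - Real.sqrt (t ^ 2 - ‖w₂‖ ^ 2)) • u := by
      rw [hFdef]; simp only [sub_smul]; abel
    rw [dist_eq_norm, dist_eq_norm, h3]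
    have h4 : ‖(w₁ - w₂) + (Real.sqrt (t ^ 2 - ‖w₁‖ ^ 2) - Real.sqrt (t ^ 2 - ‖w₂‖ ^ 2)) • u‖
        ≤ ‖w₁ - w₂‖ + |Real.sqrt (t ^ 2 - ‖w₁‖ ^ 2) - Real.sqrt (t ^ 2 - ‖w₂‖ ^ 2)| := by
      refine (norm_add_le _ _).trans ?_
      rw [norm_smul, hu, Real.norm_eq_abs, mul_one]
    have h5 := hglip ‖w₁‖ ‖w₂‖ (norm_nonneg _) (hw₁.trans hrt) (norm_nonneg _) (hw₂.trans hrt)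
    have h6 : |‖w₁‖ - ‖w₂‖| ≤ ‖w₁ - w₂‖ := abs_norm_sub_norm_le _ _
    have : ((2 : ℝ≥0) : ℝ) = 2 := by norm_num
    rw [this]
    linarith
  have hsub : Metric.sphere (0 : EuclideanSpace ℝ (Fin n)) t ∩ Metric.closedBall x r ⊆ F '' D := by
    rintro y ⟨hy1, hy2⟩
    have hyn : ‖y‖ = t := mem_sphere_zero_iff_norm.1 hy1
    have hyx : ‖y - x‖ ≤ r := by rwa [Metric.mem_closedBall, dist_eq_norm] at hy2
    set a : ℝ := ⟪u, y⟫ with ha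
    set w : EuclideanSpace ℝ (Fin n) := y - a • u with hw
    have huu : ⟪u, u⟫ = 1 := by
      rw [real_inner_self_eq_norm_sq, hu]; norm_num
    have hinner_xy : ⟪x, y⟫ = t * a := by
      rw [hxu, real_inner_smul_left]
    have hxu_inner : ⟪x, u⟫ = t := by
      rw [hxu, real_inner_smul_left, huu, mul_one]
    have hyu : ⟪y, u⟫ = a := by rw [real_inner_comm]
    have hyx_inner : ⟪y, x⟫ = t * a := by rw [real_inner_comm]; exact hinner_xy
    have ha_le : a ≤ t := by
      have h := real_inner_le_norm u y
      rw [hu, hyn, one_mul] at h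
      exact h
    have hdist2 : ‖y - x‖ ^ 2 = 2 * t * (t - a) := by
      rw [norm_sub_sq_real, hyx_inner, hyn, hx]; ring
    have h2t : 2 * t * (t - a) ≤ r ^ 2 := by
      rw [← hdist2]
      nlinarith [norm_nonneg (y - x)]
    have ha_pos : 0 ≤ a := by nlinarith
    have hw_inner : ⟪x, w⟫ = 0 := by
      rw [hw, inner_sub_right, real_inner_smul_right, hinner_xy, hxu_inner]; ring
    have hwnorm2 : ‖w‖ ^ 2 = t ^ 2 - a ^ 2 := by
      rw [hw, norm_sub_sq_real, real_inner_smul_right, hyu, norm_smul, hu, hyn,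
        Real.norm_eq_abs, mul_one, sq_abs]
      ring
    have hwr : ‖w‖ ≤ r := by
      have h9 : ‖w‖ ^ 2 ≤ r ^ 2 := by nlinarith [norm_nonneg (y - x)]
      nlinarith [norm_nonneg w]
    have hsqrt : Real.sqrt (t ^ 2 - ‖w‖ ^ 2) = a := by
      rw [hwnorm2, show t ^ 2 - (t ^ 2 - a ^ 2) = a ^ 2 by ring, Real.sqrt_sq ha_pos]
    refine ⟨w, (hDmem w).2
      ⟨Submodule.mem_orthogonal_singleton_iff_inner_right.2 hw_inner, hwr⟩, ?_⟩
    show w + Real.sqrt (t ^ 2 - ‖w‖ ^ 2) • u = y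
    rw [hsqrt, hw, sub_add_cancel]
  calc μH[(m : ℝ)] (Metric.sphere (0 : EuclideanSpace ℝ (Fin n)) t ∩ Metric.closedBall x r)
      ≤ μH[(m : ℝ)] (F '' D) := measure_mono hsub
    _ ≤ ((2 : ℝ≥0) : ℝ≥0∞) ^ (m : ℝ) * μH[(m : ℝ)] D :=
        hlipF.hausdorffMeasure_image_le (by positivity)
    _ ≤ (2 : ℝ≥0∞) ^ (m : ℝ) * (B * ENNReal.ofReal (r ^ m)) := by
        rw [show ((2 : ℝ≥0) : ℝ≥0∞) = (2 : ℝ≥0∞) by norm_num]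
        gcongr
        exact hBB x hx0 r hr
    _ = ((2 : ℝ≥0∞) ^ (m : ℝ) * B) * ENNReal.ofReal (r ^ m) := by ring

private lemma sing_zero (n m : ℕ) (hm1 : 1 ≤ m) (z : EuclideanSpace ℝ (Fin n)) :
    μH[(m : ℝ)] ({z} : Set (EuclideanSpace ℝ (Fin n))) = 0 := by
  have h : dimH ({z} : Set (EuclideanSpace ℝ (Fin n))) < ((m : ℝ≥0) : ℝ≥0∞) := by
    rw [dimH_singleton, ENNReal.coe_natCast]
    exact_mod_cast Nat.pos_of_ne_zero (by omega)
  have h2 := hausdorffMeasure_of_dimH_lt h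
  simpa using h2

private lemma cap_bound' (n m : ℕ) (hm : m + 1 = n) (hm1 : 1 ≤ m) :
    ∃ K : ℝ≥0∞, K ≠ ∞ ∧ ∀ t : ℝ, 0 ≤ t →
      ∀ x : EuclideanSpace ℝ (Fin n), ‖x‖ = t →
      ∀ r : ℝ, 0 ≤ r →
      μH[(m : ℝ)] (Metric.sphere (0 : EuclideanSpace ℝ (Fin n)) t ∩ Metric.closedBall x r)
        ≤ K * ENNReal.ofReal (r ^ m) := by
  obtain ⟨K₁, hK₁, hcap⟩ := cap_bound n m hm
  have hM : μH[(m : ℝ)] (Metric.sphere (0 : EuclideanSpace ℝ (Fin n)) 1) < ∞ := by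
    obtain ⟨s, hs_sub, hs_fin, hs_cov⟩ :=
      (isCompact_sphere (0 : EuclideanSpace ℝ (Fin n)) 1).elim_finite_subcover_image
        (fun y (_ : y ∈ Metric.sphere (0 : EuclideanSpace ℝ (Fin n)) 1) => Metric.isOpen_ball)
        (fun y hy => Set.mem_biUnion hy (Metric.mem_ball_self (by norm_num : (0:ℝ) < 1/2)))
    have hcov2 : Metric.sphere (0 : EuclideanSpace ℝ (Fin n)) 1 ⊆
        ⋃ y ∈ hs_fin.toFinset,
          (Metric.sphere (0 : EuclideanSpace ℝ (Fin n)) 1 ∩ Metric.closedBall y (1/2)) := by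
      intro z hz
      obtain ⟨y, hy, hzy⟩ := Set.mem_iUnion₂.1 (hs_cov hz)
      refine Set.mem_iUnion₂.2 ⟨y, hs_fin.mem_toFinset.2 hy, hz, Metric.ball_subset_closedBall hzy⟩
    calc μH[(m : ℝ)] (Metric.sphere (0 : EuclideanSpace ℝ (Fin n)) 1)
        ≤ ∑ y ∈ hs_fin.toFinset,
            μH[(m : ℝ)] (Metric.sphere (0 : EuclideanSpace ℝ (Fin n)) 1 ∩
              Metric.closedBall y (1/2)) :=
          (measure_mono hcov2).trans (measure_biUnion_finset_le _ _)
      _ ≤ ∑ _y ∈ hs_fin.toFinset, (K₁ * ENNReal.ofReal ((1/2 : ℝ) ^ m)) := by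
          refine Finset.sum_le_sum fun y hy => ?_
          exact hcap 1 one_pos y (mem_sphere_zero_iff_norm.1 (hs_sub (hs_fin.mem_toFinset.1 hy)))
            (1/2) (by norm_num) (by norm_num)
      _ < ∞ := by
          rw [Finset.sum_const, nsmul_eq_mul]
          exact ENNReal.mul_lt_top (ENNReal.natCast_lt_top _)
            (ENNReal.mul_lt_top hK₁.lt_top ENNReal.ofReal_lt_top)
  refine ⟨K₁ + μH[(m : ℝ)] (Metric.sphere (0 : EuclideanSpace ℝ (Fin n)) 1) *
      ENNReal.ofReal (2 ^ m),
    ENNReal.add_ne_top.2 ⟨hK₁, ENNReal.mul_ne_top hM.ne ENNReal.ofReal_ne_top⟩, ?_⟩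
  intro t ht x hx r hr
  rcases eq_or_lt_of_le ht with h0 | ht
  · calc μH[(m : ℝ)] (Metric.sphere (0 : EuclideanSpace ℝ (Fin n)) t ∩ Metric.closedBall x r)
        ≤ μH[(m : ℝ)] (Metric.sphere (0 : EuclideanSpace ℝ (Fin n)) t) :=
          measure_mono inter_subset_left
      _ = 0 := by rw [← h0, Metric.sphere_zero]; exact sing_zero n m hm1 0
      _ ≤ _ := zero_le
  rcases le_or_gt r (t / 2) with hcase | hcase
  · exact (hcap t ht x hx r hr hcase).trans (by gcongr; exact le_self_add)
  · have himg : Metric.sphere (0 : EuclideanSpace ℝ (Fin n)) t =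
        (fun z : EuclideanSpace ℝ (Fin n) => t • z) '' Metric.sphere (0 : EuclideanSpace ℝ (Fin n)) 1 := by
      ext y
      simp only [Set.mem_image, mem_sphere_zero_iff_norm]
      constructor
      · intro hy
        refine ⟨t⁻¹ • y, ?_, ?_⟩
        · rw [norm_smul, Real.norm_eq_abs, abs_of_pos (inv_pos.2 ht), hy,
            inv_mul_cancel₀ ht.ne']
        · rw [smul_smul, mul_inv_cancel₀ ht.ne', one_smul]
      · rintro ⟨z, hz, rfl⟩
        rw [norm_smul, hz, mul_one, Real.norm_eq_abs, abs_of_pos ht]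
    have h1 : ((‖t‖₊ : ℝ≥0∞)) ^ ((m : ℕ) : ℝ) = ENNReal.ofReal (t ^ m) := by
      rw [ENNReal.rpow_natCast, ← enorm_eq_nnnorm, ← ofReal_norm, Real.norm_eq_abs,
        abs_of_pos ht, ← ENNReal.ofReal_pow ht.le]
    have h2 : t ^ m ≤ 2 ^ m * r ^ m := by
      rw [← mul_pow]
      exact pow_le_pow_left₀ ht.le (by linarith) m
    calc μH[(m : ℝ)] (Metric.sphere (0 : EuclideanSpace ℝ (Fin n)) t ∩ Metric.closedBall x r)
        ≤ μH[(m : ℝ)] (Metric.sphere (0 : EuclideanSpace ℝ (Fin n)) t) :=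
          measure_mono inter_subset_left
      _ ≤ (‖t‖₊ : ℝ≥0∞) ^ ((m : ℕ) : ℝ) *
            μH[(m : ℝ)] (Metric.sphere (0 : EuclideanSpace ℝ (Fin n)) 1) := by
          rw [himg]
          exact (lipschitzWith_smul t).hausdorffMeasure_image_le (by positivity) _
      _ ≤ ENNReal.ofReal (2 ^ m * r ^ m) *
            μH[(m : ℝ)] (Metric.sphere (0 : EuclideanSpace ℝ (Fin n)) 1) := by
          rw [h1]; gcongr
      _ = μH[(m : ℝ)] (Metric.sphere (0 : EuclideanSpace ℝ (Fin n)) 1) *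
            ENNReal.ofReal (2 ^ m) * ENNReal.ofReal (r ^ m) := by
          rw [ENNReal.ofReal_mul (by positivity)]; ring
      _ ≤ (K₁ + μH[(m : ℝ)] (Metric.sphere (0 : EuclideanSpace ℝ (Fin n)) 1) *
            ENNReal.ofReal (2 ^ m)) * ENNReal.ofReal (r ^ m) := by
          gcongr
          exact le_add_self

/-- Uniform bound for the sphere convolution of a mixing-type kernel:
for `n ≥ 2` there is a constant `C(n)` such that for every nonincreasing
nonnegative `φ` with `∫₀^∞ r^{n-2} √(φ r) dr = C̄ < ∞`, every `t ≥ 0` and every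
point `x` on the sphere `S_t = {‖y‖ = t}`,
`∫_{S_t} √(φ (‖x - y‖)) dS(y) ≤ C(n) C̄`, where `dS` is the surface
((n-1)-dimensional Hausdorff) measure. -/
theorem stmt_11 (n : ℕ) (hn : 2 ≤ n) :
    ∃ C : ℝ, 0 < C ∧
      ∀ (φ : ℝ → ℝ), (∀ r, 0 ≤ r → 0 ≤ φ r) → AntitoneOn φ (Ici 0) →
      ∀ Cbar : ℝ,
      IntegrableOn (fun r => r ^ (n - 2) * Real.sqrt (φ r)) (Ioi 0) →
      (∫ r in Ioi (0:ℝ), r ^ (n - 2) * Real.sqrt (φ r)) = Cbar →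
      ∀ t : ℝ, 0 ≤ t →
      ∀ x : EuclideanSpace ℝ (Fin n), x ∈ Metric.sphere (0 : EuclideanSpace ℝ (Fin n)) t →
      (∫⁻ y in Metric.sphere (0 : EuclideanSpace ℝ (Fin n)) t,
          ENNReal.ofReal (Real.sqrt (φ ‖x - y‖)) ∂(μH[(n : ℝ) - 1]))
        ≤ ENNReal.ofReal (C * Cbar) := by
  set m := n - 1 with hm_def
  have hmn : m + 1 = n := by omega
  have hm1 : 1 ≤ m := by omega
  have hnm2 : n - 2 + 1 = m := by omega
  have hd : (n : ℝ) - 1 = (m : ℝ) := by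
    rw [hm_def, Nat.cast_sub (by omega : 1 ≤ n), Nat.cast_one]
  obtain ⟨K, hK, hcap⟩ := cap_bound' n m hmn hm1
  refine ⟨K.toReal * 4 ^ m + 1, by positivity, ?_⟩
  intro φ hφ0 hφmono Cbar hInt hCbar t ht x hx
  have hxn : ‖x‖ = t := mem_sphere_zero_iff_norm.1 hx
  have hCbar0 : 0 ≤ Cbar := by
    rw [← hCbar]
    apply setIntegral_nonneg measurableSet_Ioi
    intro r hr
    exact mul_nonneg (pow_nonneg (le_of_lt hr) _) (Real.sqrt_nonneg _)
  rw [hd]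
  rcases eq_or_lt_of_le ht with h0 | ht
  · rw [← h0, Metric.sphere_zero,
      setLIntegral_measure_zero _ _ (sing_zero n m hm1 (0 : EuclideanSpace ℝ (Fin n)))]
    exact zero_le
  -- main case : t > 0
  set a : ℕ → ℝ := fun k => 2 * t / 2 ^ k with ha
  have ha_pos : ∀ k, 0 < a k := fun k => by rw [ha]; positivity
  have ha_succ : ∀ k, a (k + 1) = a k / 2 := by
    intro k
    simp only [ha]
    rw [pow_succ, div_div]
  have ha_anti : ∀ j k, j ≤ k → a k ≤ a j := by
    intro j k h
    rw [ha]
    exact div_le_div_of_nonneg_left (by positivity) (by positivity)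
      (pow_le_pow_right₀ one_le_two h)
  set f : EuclideanSpace ℝ (Fin n) → ℝ≥0∞ :=
    fun y => ENNReal.ofReal (Real.sqrt (φ ‖x - y‖)) with hf
  set Ek : ℕ → Set (EuclideanSpace ℝ (Fin n)) := fun k =>
    Metric.sphere (0 : EuclideanSpace ℝ (Fin n)) t ∩
      {y | ‖x - y‖ ∈ Ioc (a (k + 1)) (a k)} with hEk
  have hEk_meas : ∀ k, MeasurableSet (Ek k) := by
    intro k
    exact (Metric.isClosed_sphere.measurableSet).inter
      (((continuous_const.sub continuous_id).norm).measurable measurableSet_Ioc)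
  have hcover : Metric.sphere (0 : EuclideanSpace ℝ (Fin n)) t ⊆ {x} ∪ ⋃ k, Ek k := by
    intro y hy
    have hyn : ‖y‖ = t := mem_sphere_zero_iff_norm.1 hy
    rcases eq_or_ne ‖x - y‖ 0 with hz | hz
    · left
      have : x = y := sub_eq_zero.1 (norm_eq_zero.1 hz)
      simp [this.symm]
    · right
      have hpos : 0 < ‖x - y‖ := lt_of_le_of_ne (norm_nonneg _) (Ne.symm hz)
      have hle : ‖x - y‖ ≤ a 0 := by
        rw [ha]
        simp only [pow_zero, div_one]
        calc ‖x - y‖ ≤ ‖x‖ + ‖y‖ := norm_sub_le _ _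
          _ = 2 * t := by rw [hxn, hyn]; ring
      have hex : ∃ k, a (k + 1) < ‖x - y‖ := by
        obtain ⟨k, hk⟩ := pow_unbounded_of_one_lt (2 * t / ‖x - y‖) (one_lt_two (α := ℝ))
        refine ⟨k, ?_⟩
        rw [ha, div_lt_iff₀ (by positivity)]
        rw [div_lt_iff₀ hpos] at hk
        calc 2 * t < 2 ^ k * ‖x - y‖ := hk
          _ ≤ ‖x - y‖ * 2 ^ (k + 1) := by
              rw [pow_succ]
              nlinarith [pow_pos (zero_lt_two (α := ℝ)) k]
      have h1 : a (Nat.find hex + 1) < ‖x - y‖ := Nat.find_spec hex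
      have h2 : ‖x - y‖ ≤ a (Nat.find hex) := by
        rcases Nat.eq_zero_or_pos (Nat.find hex) with h | h
        · rw [h]; exact hle
        · have h3 := Nat.find_min hex (show Nat.find hex - 1 < Nat.find hex by omega)
          push_neg at h3
          have : Nat.find hex - 1 + 1 = Nat.find hex := by omega
          rwa [this] at h3
      exact Set.mem_iUnion.2 ⟨Nat.find hex, hy, h1, h2⟩
  have hstep : ∀ k, ∫⁻ y in Ek k, f y ∂μH[(m : ℝ)] ≤
      ENNReal.ofReal (Real.sqrt (φ (a (k + 1)))) * (K * ENNReal.ofReal ((a k) ^ m)) := by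
    intro k
    have h1 : ∀ y ∈ Ek k, f y ≤ ENNReal.ofReal (Real.sqrt (φ (a (k + 1)))) := by
      rintro y ⟨_, hy2, _⟩
      exact ENNReal.ofReal_le_ofReal (Real.sqrt_le_sqrt
        (hφmono (mem_Ici.2 (ha_pos (k + 1)).le) (mem_Ici.2 (norm_nonneg _)) hy2.le))
    calc ∫⁻ y in Ek k, f y ∂μH[(m : ℝ)]
        ≤ ∫⁻ _y in Ek k, ENNReal.ofReal (Real.sqrt (φ (a (k + 1)))) ∂μH[(m : ℝ)] :=
          setLIntegral_mono' (hEk_meas k) h1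
      _ = ENNReal.ofReal (Real.sqrt (φ (a (k + 1)))) * μH[(m : ℝ)] (Ek k) :=
          setLIntegral_const _ _
      _ ≤ ENNReal.ofReal (Real.sqrt (φ (a (k + 1)))) * (K * ENNReal.ofReal ((a k) ^ m)) := by
          gcongr
          refine le_trans (measure_mono ?_) (hcap t ht.le x hxn (a k) (ha_pos k).le)
          rintro y ⟨hy1, _, hy3⟩
          refine ⟨hy1, ?_⟩
          rw [Metric.mem_closedBall, dist_eq_norm, ← norm_sub_rev]
          exact hy3
  set I : ℕ → ℝ≥0∞ := fun k =>
    ∫⁻ r in Ioc (a (k + 2)) (a (k + 1)), ENNReal.ofReal (r ^ (n - 2) * Real.sqrt (φ r)) with hI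
  have ha_diff : ∀ k, a (k + 1) - a (k + 2) = a (k + 2) := by
    intro k
    have := ha_succ (k + 1)
    rw [show k + 1 + 1 = k + 2 from rfl] at this
    rw [this]
    ring
  have hlow : ∀ k, ENNReal.ofReal (Real.sqrt (φ (a (k + 1))) * (a (k + 2)) ^ m) ≤ I k := by
    intro k
    have h1 : ∀ r ∈ Ioc (a (k + 2)) (a (k + 1)),
        ENNReal.ofReal ((a (k + 2)) ^ (n - 2) * Real.sqrt (φ (a (k + 1))))
          ≤ ENNReal.ofReal (r ^ (n - 2) * Real.sqrt (φ r)) := by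
      rintro r ⟨hr1, hr2⟩
      apply ENNReal.ofReal_le_ofReal
      apply mul_le_mul (pow_le_pow_left₀ (ha_pos _).le hr1.le _)
        (Real.sqrt_le_sqrt (hφmono (mem_Ici.2 ((ha_pos (k + 2)).trans hr1).le)
          (mem_Ici.2 (ha_pos (k + 1)).le) hr2))
        (Real.sqrt_nonneg _) (pow_nonneg ((ha_pos (k + 2)).le.trans hr1.le) _)
    calc ENNReal.ofReal (Real.sqrt (φ (a (k + 1))) * (a (k + 2)) ^ m)
        = ENNReal.ofReal ((a (k + 2)) ^ (n - 2) * Real.sqrt (φ (a (k + 1)))) *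
            ENNReal.ofReal (a (k + 2)) := by
          rw [← ENNReal.ofReal_mul (by positivity)]
          congr 1
          rw [← hnm2, pow_succ]
          ring
      _ = ∫⁻ _r in Ioc (a (k + 2)) (a (k + 1)),
            ENNReal.ofReal ((a (k + 2)) ^ (n - 2) * Real.sqrt (φ (a (k + 1)))) := by
          rw [setLIntegral_const, Real.volume_Ioc, ha_diff k]
      _ ≤ I k := setLIntegral_mono' measurableSet_Ioc h1
  have hcomb : ∀ k, ∫⁻ y in Ek k, f y ∂μH[(m : ℝ)] ≤
      K * ENNReal.ofReal (4 ^ m) * I k := by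
    intro k
    refine le_trans (hstep k) ?_
    have h4 : (a k) ^ m = 4 ^ m * (a (k + 2)) ^ m := by
      rw [← mul_pow]
      congr 1
      have e1 := ha_succ k
      have e2 := ha_diff k
      linarith
    calc ENNReal.ofReal (Real.sqrt (φ (a (k + 1)))) * (K * ENNReal.ofReal ((a k) ^ m))
        = K * ENNReal.ofReal (4 ^ m) *
            (ENNReal.ofReal (Real.sqrt (φ (a (k + 1)))) * ENNReal.ofReal ((a (k + 2)) ^ m)) := by
          rw [h4, ENNReal.ofReal_mul (by positivity)]
          ring
      _ = K * ENNReal.ofReal (4 ^ m) *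
            ENNReal.ofReal (Real.sqrt (φ (a (k + 1))) * (a (k + 2)) ^ m) := by
          rw [ENNReal.ofReal_mul (Real.sqrt_nonneg _)]
      _ ≤ K * ENNReal.ofReal (4 ^ m) * I k := by gcongr; exact hlow k
  have hIsum : ∑' k, I k ≤ ENNReal.ofReal Cbar := by
    have hdisj : Pairwise (Function.onFun Disjoint fun k => Ioc (a (k + 2)) (a (k + 1))) := by
      have key : ∀ i j, i < j →
          Disjoint (Ioc (a (i + 2)) (a (i + 1))) (Ioc (a (j + 2)) (a (j + 1))) := by
        intro i j hij
        apply Set.disjoint_left.2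
        rintro r ⟨h1, _⟩ ⟨_, h4⟩
        have h5 : a (j + 1) ≤ a (i + 2) := ha_anti _ _ (by omega)
        linarith
      intro i j hij
      rcases hij.lt_or_gt with h | h
      · exact key i j h
      · exact (key j i h).symm
    have hIU := lintegral_iUnion (μ := (volume : Measure ℝ))
      (s := fun k => Ioc (a (k + 2)) (a (k + 1)))
      (fun _ => measurableSet_Ioc) hdisj
      (fun r => ENNReal.ofReal (r ^ (n - 2) * Real.sqrt (φ r)))
    rw [hI, ← hIU]
    have hsubU : (⋃ k, Ioc (a (k + 2)) (a (k + 1))) ⊆ Ioi (0 : ℝ) := by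
      rintro r hr
      obtain ⟨k, hk1, _⟩ := Set.mem_iUnion.1 hr
      exact lt_trans (ha_pos (k + 2)) hk1
    refine le_trans (lintegral_mono_set hsubU) ?_
    have hae : 0 ≤ᵐ[volume.restrict (Ioi (0:ℝ))] fun r => r ^ (n - 2) * Real.sqrt (φ r) := by
      refine (ae_restrict_iff' measurableSet_Ioi).2 (ae_of_all _ fun r hr => ?_)
      exact mul_nonneg (pow_nonneg (le_of_lt hr) _) (Real.sqrt_nonneg _)
    rw [← ofReal_integral_eq_lintegral_ofReal hInt hae, hCbar]
  calc ∫⁻ y in Metric.sphere (0 : EuclideanSpace ℝ (Fin n)) t, f y ∂μH[(m : ℝ)]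
      ≤ ∫⁻ y in {x} ∪ ⋃ k, Ek k, f y ∂μH[(m : ℝ)] := lintegral_mono_set hcover
    _ ≤ (∫⁻ y in ({x} : Set (EuclideanSpace ℝ (Fin n))), f y ∂μH[(m : ℝ)]) +
          ∫⁻ y in ⋃ k, Ek k, f y ∂μH[(m : ℝ)] := lintegral_union_le _ _ _
    _ ≤ 0 + ∑' k, ∫⁻ y in Ek k, f y ∂μH[(m : ℝ)] := by
        gcongr
        · exact le_of_eq (setLIntegral_measure_zero _ _ (sing_zero n m hm1 x))
        · exact lintegral_iUnion_le _ _
    _ ≤ ∑' k, (K * ENNReal.ofReal (4 ^ m) * I k) := by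
        rw [zero_add]
        exact ENNReal.tsum_le_tsum hcomb
    _ = K * ENNReal.ofReal (4 ^ m) * ∑' k, I k := ENNReal.tsum_mul_left
    _ ≤ K * ENNReal.ofReal (4 ^ m) * ENNReal.ofReal Cbar := by gcongr
    _ ≤ ENNReal.ofReal K.toReal * ENNReal.ofReal (4 ^ m) * ENNReal.ofReal Cbar := by
        gcongr
        exact le_of_eq (ENNReal.ofReal_toReal hK).symm
    _ = ENNReal.ofReal (K.toReal * 4 ^ m * Cbar) := by
        rw [← ENNReal.ofReal_mul ENNReal.toReal_nonneg, ← ENNReal.ofReal_mul (by positivity)]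
    _ ≤ ENNReal.ofReal ((K.toReal * 4 ^ m + 1) * Cbar) :=
        ENNReal.ofReal_le_ofReal (by nlinarith [hCbar0])
end
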